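/- For all natural numbers n, k and ℓ, the number of isomorphism classes of C1-pairs (S,R) on {1,…,n} with mmax(S) = k and mmax(R) = ℓ equals the number of isomorphism classes of C1-pairs (S,R) on {1,…,n} with mmax(S) = ℓ and mmax(R) = k. In other words, the statistics mmax(S) and mmax(R) have symmetric joint distribution on C1-pairs of order n. -/

import Mathlib

open scoped Classical

namespace FishburnPaper

universe u

/-- A strict partial order: irreflexive and transitive. -/
def StrictOrd {X : Type u} (Q : X → X → Prop) : Prop :=
  (∀ x, ¬ Q x x) ∧ ∀ ⦃x y z⦄, Q x y → Q y z → Q x z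

/-- `x` and `y` are comparable by the relation `Q`. -/
def Cmp {X : Type u} (Q : X → X → Prop) (x y : X) : Prop := Q x y ∨ Q y x

/-- Exactly one of the three propositions holds. -/
def ExactlyOne3 (a b c : Prop) : Prop :=
  (a ∨ b ∨ c) ∧ ¬ (a ∧ b) ∧ ¬ (a ∧ c) ∧ ¬ (b ∧ c)

/-- A C1-pair: `S` and `R` are strict partial orders, any two distinct elements are
comparable by exactly one of them, and `x S y → y R z → x R z` for distinct `x,y,z`. -/
def IsC1Pair {X : Type u} (S R : X → X → Prop) : Prop :=
  StrictOrd S ∧ StrictOrd R ∧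
  (∀ x y : X, x ≠ y → Xor' (Cmp S x y) (Cmp R x y)) ∧
  (∀ x y z : X, x ≠ y → y ≠ z → x ≠ z → S x y → R y z → R x z)

/-- A C2-pair: `R` and `T ∪ R` are strict partial orders, any two distinct elements are
comparable by exactly one of `T` and `R`, and the two three-element patterns are forbidden. -/
def IsC2Pair {X : Type u} (T R : X → X → Prop) : Prop :=
  StrictOrd R ∧ StrictOrd (fun x y => T x y ∨ R x y) ∧
  (∀ x y : X, x ≠ y → Xor' (Cmp T x y) (Cmp R x y)) ∧
  (¬ ∃ x y z : X, x ≠ y ∧ y ≠ z ∧ x ≠ z ∧ T x y ∧ T x z ∧ R y z) ∧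
  (¬ ∃ x y z : X, x ≠ y ∧ y ≠ z ∧ x ≠ z ∧ T y x ∧ T z x ∧ R y z)

/-- A Fishburn triple: `S`, `R` and `T ∪ R` are strict partial orders, any two distinct
elements are comparable by exactly one of `T`, `S`, `R`, the axioms C1c, C1c* hold,
and the two three-element patterns of axiom C2c are forbidden. -/
def IsFishburnTriple {X : Type u} (T S R : X → X → Prop) : Prop :=
  StrictOrd S ∧ StrictOrd R ∧ StrictOrd (fun x y => T x y ∨ R x y) ∧
  (∀ x y : X, x ≠ y → ExactlyOne3 (Cmp T x y) (Cmp S x y) (Cmp R x y)) ∧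
  (∀ x y z : X, x ≠ y → y ≠ z → x ≠ z → S x y → R y z → R x z) ∧
  (∀ x y z : X, x ≠ y → y ≠ z → x ≠ z → S x y → R z y → R z x) ∧
  (¬ ∃ x y z : X, x ≠ y ∧ y ≠ z ∧ x ≠ z ∧ T x y ∧ T x z ∧ R y z) ∧
  (¬ ∃ x y z : X, x ≠ y ∧ y ≠ z ∧ x ≠ z ∧ T y x ∧ T z x ∧ R z y)

/-- `R` contains the poset 2+2: four distinct elements `a,b,c,d` with `a R b`, `c R d`,
and no other ordered pair among them in `R`. -/
def Contains22 {X : Type u} (R : X → X → Prop) : Prop :=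
  ∃ a b c d : X, a ≠ b ∧ a ≠ c ∧ a ≠ d ∧ b ≠ c ∧ b ≠ d ∧ c ≠ d ∧
    R a b ∧ R c d ∧
    ¬ R b a ∧ ¬ R a c ∧ ¬ R c a ∧ ¬ R a d ∧ ¬ R d a ∧
    ¬ R b c ∧ ¬ R c b ∧ ¬ R b d ∧ ¬ R d b ∧ ¬ R d c

/-- `R` contains the poset 3+1: four distinct elements `a,b,c,d` with `a R b`, `b R c`,
`a R c`, and `d` incomparable to each of `a,b,c`. -/
def Contains31 {X : Type u} (R : X → X → Prop) : Prop :=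
  ∃ a b c d : X, a ≠ b ∧ a ≠ c ∧ a ≠ d ∧ b ≠ c ∧ b ≠ d ∧ c ≠ d ∧
    R a b ∧ R b c ∧ R a c ∧ ¬ Cmp R d a ∧ ¬ Cmp R d b ∧ ¬ Cmp R d c

/-- `R` contains the poset N: four distinct elements `u,v,x,y` with `u R v`, `u R y`,
`x R v`, and no other ordered pair among them in `R`. -/
def ContainsN {X : Type u} (R : X → X → Prop) : Prop :=
  ∃ u v x y : X, u ≠ v ∧ u ≠ x ∧ u ≠ y ∧ v ≠ x ∧ v ≠ y ∧ x ≠ y ∧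
    R u v ∧ R u y ∧ R x v ∧
    ¬ R v u ∧ ¬ R u x ∧ ¬ R x u ∧ ¬ R y u ∧ ¬ R v x ∧ ¬ R v y ∧
    ¬ R y v ∧ ¬ R x y ∧ ¬ R y x

/-- Number of `Q`-maximal elements. -/
noncomputable def mmax {X : Type u} (Q : X → X → Prop) : ℕ :=
  Nat.card {x : X // ∀ y : X, ¬ Q x y}

/-- A Fishburn matrix: upper triangular (rows numbered top to bottom), every row and
every column contains a nonzero entry. -/
def IsFishburn {m : ℕ} (M : Fin m → Fin m → ℕ) : Prop :=
  (∀ i j : Fin m, j < i → M i j = 0) ∧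
  (∀ i : Fin m, ∃ j : Fin m, M i j ≠ 0) ∧
  (∀ j : Fin m, ∃ i : Fin m, M i j ≠ 0)

/-- A cell `(i, j)` of an `m × m` matrix. -/
abbrev Cell (m : ℕ) := Fin m × Fin m

/-- Cell `c = (i,j)` is smaller than `c' = (i',j')` if `j < i'`. -/
def Smaller {m : ℕ} (c c' : Cell m) : Prop := c.2 < c'.1

/-- Cells `c` and `c'` are incomparable: neither is smaller than the other. -/
def Incomp {m : ℕ} (c c' : Cell m) : Prop := ¬ Smaller c c' ∧ ¬ Smaller c' c

/-- `c = (i,j)` is strictly SW of `c' = (i',j')` : `i > i'` and `j < j'`. -/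
def StrictSW {m : ℕ} (c c' : Cell m) : Prop := c'.1 < c.1 ∧ c.2 < c'.2

/-- `c = (i,j)` is weakly SW of `c' = (i',j')` : `c ≠ c'`, `i ≥ i'` and `j ≤ j'`. -/
def WeakSW {m : ℕ} (c c' : Cell m) : Prop := c ≠ c' ∧ c'.1 ≤ c.1 ∧ c.2 ≤ c'.2

/-- `c = (i,j)` is strictly NW of `c' = (i',j')` : incomparable, `i < i'` and `j < j'`. -/
def StrictNW {m : ℕ} (c c' : Cell m) : Prop := Incomp c c' ∧ c.1 < c'.1 ∧ c.2 < c'.2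

/-- `c = (i,j)` is weakly NW of `c' = (i',j')` : `c ≠ c'`, incomparable, `i ≤ i'`, `j ≤ j'`. -/
def WeakNW {m : ℕ} (c c' : Cell m) : Prop := c ≠ c' ∧ Incomp c c' ∧ c.1 ≤ c'.1 ∧ c.2 ≤ c'.2

/-- A nonzero cell of `M` (on or above the diagonal). -/
def NonzeroCell {m : ℕ} (M : Fin m → Fin m → ℕ) (c : Cell m) : Prop :=
  c.1 ≤ c.2 ∧ M c.1 c.2 ≠ 0

/-- The ground set `X_M = {(i,j,a) : i ≤ j, a < M i j}` of the poset induced by `M`. -/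
abbrev XM {m : ℕ} (M : Fin m → Fin m → ℕ) : Type :=
  {x : Fin m × Fin m × ℕ // x.1 ≤ x.2.1 ∧ x.2.2 < M x.1 x.2.1}

/-- The cell representing an element of `X_M`. -/
def cellOf {m : ℕ} {M : Fin m → Fin m → ℕ} (x : XM M) : Cell m := (x.1.1, x.1.2.1)

/-- The interval order induced by `M`: `(i,j,a) R (i',j',a')` iff `j < i'`. -/
def Rind {m : ℕ} {M : Fin m → Fin m → ℕ} (x y : XM M) : Prop := x.1.2.1 < y.1.1

/-- A nonzero cell with no other nonzero cell weakly NE of it. -/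
def IsWNECell {m : ℕ} (M : Fin m → Fin m → ℕ) (c : Cell m) : Prop :=
  NonzeroCell M c ∧ ∀ c' : Cell m, NonzeroCell M c' → c' ≠ c → ¬ WeakSW c c'

/-- A nonzero cell with no other nonzero cell strictly NE of it. -/
def IsSNECell {m : ℕ} (M : Fin m → Fin m → ℕ) (c : Cell m) : Prop :=
  NonzeroCell M c ∧ ∀ c' : Cell m, NonzeroCell M c' → c' ≠ c → ¬ StrictSW c c'

/-- A nonzero cell with no other nonzero cell strictly SE of it. -/
def IsSSECell {m : ℕ} (M : Fin m → Fin m → ℕ) (c : Cell m) : Prop :=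
  NonzeroCell M c ∧ ∀ c' : Cell m, NonzeroCell M c' → c' ≠ c → ¬ StrictNW c c'

/-- A nonzero cell with no other nonzero cell weakly SE of it. -/
def IsWSECell {m : ℕ} (M : Fin m → Fin m → ℕ) (c : Cell m) : Prop :=
  NonzeroCell M c ∧ ∀ c' : Cell m, NonzeroCell M c' → c' ≠ c → ¬ WeakNW c c'

/-- The number of wNE-cells of `M`. -/
noncomputable def wNEcount {m : ℕ} (M : Fin m → Fin m → ℕ) : ℕ :=
  Nat.card {c : Cell m // IsWNECell M c}

/-- The number of wSE-cells of `M`. -/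
noncomputable def wSEcount {m : ℕ} (M : Fin m → Fin m → ℕ) : ℕ :=
  Nat.card {c : Cell m // IsWSECell M c}

/-- The total weight of the sNE-cells of `M`. -/
noncomputable def sNEweight {m : ℕ} (M : Fin m → Fin m → ℕ) : ℕ :=
  ∑ c : Cell m, if IsSNECell M c then M c.1 c.2 else 0

/-- The total weight of the sSE-cells of `M`. -/
noncomputable def sSEweight {m : ℕ} (M : Fin m → Fin m → ℕ) : ℕ :=
  ∑ c : Cell m, if IsSSECell M c then M c.1 c.2 else 0

/-- The weight of `M`: the sum of all entries. -/
def weight {m : ℕ} (M : Fin m → Fin m → ℕ) : ℕ := ∑ c : Cell m, M c.1 c.2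

/-- The weight of the last column of `M`. -/
def lastColWeight {m : ℕ} (M : Fin m → Fin m → ℕ) : ℕ :=
  ∑ c : Cell m, if c.2.val = m - 1 then M c.1 c.2 else 0

/-- The total weight of the columns of `M` preceding the last one. -/
def prevColWeight {m : ℕ} (M : Fin m → Fin m → ℕ) : ℕ :=
  ∑ c : Cell m, if c.2.val < m - 1 then M c.1 c.2 else 0

/-- The first component of the F1-triple of `M`: `x T₁ y` iff `c_x` strictly NW of `c_y`. -/
def T1 {m : ℕ} {M : Fin m → Fin m → ℕ} (x y : XM M) : Prop :=
  StrictNW (cellOf x) (cellOf y)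

/-- The second component of the F1-triple of `M`: `x S₁ y` iff `c_x` weakly SW of `c_y`,
or `c_x = c_y` and the third coordinate of `x` is smaller than that of `y`. -/
def S1 {m : ℕ} {M : Fin m → Fin m → ℕ} (x y : XM M) : Prop :=
  WeakSW (cellOf x) (cellOf y) ∨ (cellOf x = cellOf y ∧ x.1.2.2 < y.1.2.2)

/-- The first component of the F2-triple of `M`: `x T₂ y` iff `c_x` weakly NW of `c_y`,
or `c_x = c_y` and the third coordinate of `x` is smaller than that of `y`. -/
def T2 {m : ℕ} {M : Fin m → Fin m → ℕ} (x y : XM M) : Prop :=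
  WeakNW (cellOf x) (cellOf y) ∨ (cellOf x = cellOf y ∧ x.1.2.2 < y.1.2.2)

/-- The second component of the F2-triple of `M`: `x S₂ y` iff `c_x` strictly SW of `c_y`. -/
def S2 {m : ℕ} {M : Fin m → Fin m → ℕ} (x y : XM M) : Prop :=
  StrictSW (cellOf x) (cellOf y)

/-- C1-pairs on `Fin n`. -/
abbrev C1PairsOn (n : ℕ) :=
  {p : (Fin n → Fin n → Prop) × (Fin n → Fin n → Prop) // IsC1Pair p.1 p.2}

/-- C2-pairs on `Fin n`. -/
abbrev C2PairsOn (n : ℕ) :=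
  {p : (Fin n → Fin n → Prop) × (Fin n → Fin n → Prop) // IsC2Pair p.1 p.2}

/-- Isomorphism of C1-pairs. -/
def isoC1 {n : ℕ} (p q : C1PairsOn n) : Prop :=
  ∃ f : Fin n ≃ Fin n, ∀ x y : Fin n,
    (p.1.1 x y ↔ q.1.1 (f x) (f y)) ∧ (p.1.2 x y ↔ q.1.2 (f x) (f y))

/-- Isomorphism of C2-pairs. -/
def isoC2 {n : ℕ} (p q : C2PairsOn n) : Prop :=
  ∃ f : Fin n ≃ Fin n, ∀ x y : Fin n,
    (p.1.1 x y ↔ q.1.1 (f x) (f y)) ∧ (p.1.2 x y ↔ q.1.2 (f x) (f y))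

/-- Fishburn matrices of weight `n` (of arbitrary size `m ≥ 1`). -/
abbrev FishburnW (n : ℕ) :=
  {p : Σ m : ℕ, Fin m → Fin m → ℕ // 0 < p.1 ∧ IsFishburn p.2 ∧ weight p.2 = n}


namespace Aux

open Finset

/-- Valid threshold sequences: the canonical encoding of a C1-pair. -/
def Valid (n : ℕ) (c : ℕ → ℕ) : Prop :=
  (∀ k, 1 ≤ k → k ≤ n → c k < k) ∧
  (∀ j k, 1 ≤ j → j < k → k ≤ n → c k < j → c j < j - 1 → c k ≤ c j) ∧
  (∀ k, c k ≠ 0 → 1 ≤ k ∧ k ≤ n)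

def APt (n : ℕ) (c : ℕ → ℕ) (x : ℕ) : Prop := ∀ k, x < k → k ≤ n → x ≤ c k
def BPt (n : ℕ) (c : ℕ → ℕ) (x : ℕ) : Prop := ∀ k, x < k → k ≤ n → c k < x

noncomputable def Astat (n : ℕ) (c : ℕ → ℕ) : ℕ := ((Icc 1 n).filter (APt n c)).card
noncomputable def Bstat (n : ℕ) (c : ℕ → ℕ) : ℕ := ((Icc 1 n).filter (BPt n c)).card

lemma BPt_mono {n : ℕ} {c : ℕ → ℕ} {x y : ℕ} (hxy : x ≤ y) (h : BPt n c x) : BPt n c y :=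
  fun k hk hk' => lt_of_lt_of_le (h k (lt_of_le_of_lt hxy hk) hk') hxy

lemma Bstat_le {n : ℕ} {c : ℕ → ℕ} : Bstat n c ≤ n := by
  have : ((Icc 1 n).filter (BPt n c)).card ≤ (Icc 1 n).card := card_filter_le _ _
  simpa [Bstat, Nat.card_Icc] using this

lemma Astat_le {n : ℕ} {c : ℕ → ℕ} : Astat n c ≤ n := by
  have : ((Icc 1 n).filter (APt n c)).card ≤ (Icc 1 n).card := card_filter_le _ _
  simpa [Astat, Nat.card_Icc] using this

lemma BPt_top {n : ℕ} {c : ℕ → ℕ} : BPt n c n := fun k hk hk' => absurd hk (not_lt.mpr hk')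
lemma APt_top {n : ℕ} {c : ℕ → ℕ} : APt n c n := fun k hk hk' => absurd hk (not_lt.mpr hk')

lemma Bstat_pos {n : ℕ} {c : ℕ → ℕ} (hn : 1 ≤ n) : 1 ≤ Bstat n c := by
  have : n ∈ (Icc 1 n).filter (BPt n c) := by
    simp [mem_filter, mem_Icc, hn, BPt_top]
  exact card_pos.mpr ⟨n, this⟩

lemma Astat_pos {n : ℕ} {c : ℕ → ℕ} (hn : 1 ≤ n) : 1 ≤ Astat n c := by
  have : n ∈ (Icc 1 n).filter (APt n c) := by
    simp [mem_filter, mem_Icc, hn, APt_top]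
  exact card_pos.mpr ⟨n, this⟩

/-- The B-points are exactly the top `Bstat` positions. -/
lemma Bchar {n : ℕ} {c : ℕ → ℕ} {x : ℕ} (hx1 : 1 ≤ x) (hxn : x ≤ n) :
    BPt n c x ↔ n - Bstat n c < x := by
  set T := (Icc 1 n).filter (BPt n c) with hT
  have hcard : T.card = Bstat n c := rfl
  have hTle : T.card ≤ n := Bstat_le
  constructor
  · intro hB
    have hsub : Icc x n ⊆ T := by
      intro y hy
      rw [mem_Icc] at hy
      rw [hT, mem_filter, mem_Icc]
      exact ⟨⟨le_trans hx1 hy.1, hy.2⟩, BPt_mono hy.1 hB⟩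
    have := card_le_card hsub
    rw [Nat.card_Icc] at this
    omega
  · intro hlt
    by_contra hB
    have hsub : T ⊆ Icc (x+1) n := by
      intro y hy
      rw [hT, mem_filter, mem_Icc] at hy
      rw [mem_Icc]
      refine ⟨?_, hy.1.2⟩
      by_contra hyx
      exact hB (BPt_mono (by omega) hy.2)
    have := card_le_card hsub
    rw [Nat.card_Icc] at this
    omega


section Struct
variable {n : ℕ} {c : ℕ → ℕ} (hv : Valid n c) (hn : 1 ≤ n)

/-- L1: the entry at position `m+1` (the least B-point) is full. -/
lemma c_at_full (hv : Valid n c) (hn : 1 ≤ n) : c (n - Bstat n c + 1) = n - Bstat n c := by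
  set ℓ := Bstat n c with hℓ
  set m := n - ℓ with hm
  have hℓ1 : 1 ≤ ℓ := Bstat_pos hn
  have hℓn : ℓ ≤ n := Bstat_le
  have hm1n : m + 1 ≤ n := by omega
  have hBm1 : BPt n c (m+1) := (Bchar (by omega) hm1n).mpr (by omega)
  rcases Nat.eq_zero_or_pos m with h0 | hmpos
  · -- m = 0 : c 1 < 1
    have h1 := hv.1 1 le_rfl (by omega)
    rw [h0]
    norm_num
    omega
  · have hnB : ¬ BPt n c m := by
      rw [Bchar (by omega) (by omega)]; omega
    rw [BPt] at hnB
    push_neg at hnB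
    obtain ⟨k, hk1, hk2, hk3⟩ := hnB
    -- c k ≥ m, k > m, k ≤ n
    rcases eq_or_lt_of_le (show m + 1 ≤ k by omega) with heq | hlt
    · -- k = m+1
      rw [← heq] at hk3
      have := hv.1 (m+1) (by omega) hm1n
      omega
    · -- k ≥ m+2 : c k < m+1 from hBm1, so c k = m; contradiction via validity
      have hck : c k < m + 1 := hBm1 k (by omega) hk2
      have hckm : c k = m := by omega
      by_contra hne
      have hcm1 : c (m+1) < m + 1 := hv.1 (m+1) (by omega) hm1n
      have hcm1' : c (m+1) < (m+1) - 1 := by omega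
      have := hv.2.1 (m+1) k (by omega) hlt hk2 (by omega) hcm1'
      omega

/-- L2: the suffix after position m+1 is weakly decreasing. -/
lemma suffix_anti (hv : Valid n c) {j j' : ℕ} (hj : n - Bstat n c + 2 ≤ j) (hjj : j ≤ j')
    (hj' : j' ≤ n) : c j' ≤ c j := by
  set ℓ := Bstat n c with hℓ
  set m := n - ℓ with hm
  rcases eq_or_lt_of_le hjj with rfl | hlt
  · exact le_rfl
  · have hℓn : ℓ ≤ n := Bstat_le
    have hBj : BPt n c (j-1) := by
      rw [Bchar (by omega) (by omega)]; omega
    have h1 : c j' < j - 1 := hBj j' (by omega) hj'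
    have h2 : c j < j - 1 := hBj j (by omega) (by omega)
    exact hv.2.1 j j' (by omega) hlt hj' (by omega) (by omega)

/-- Menu membership: `v` is in the stack after the first `m` steps. -/
def Menu (m : ℕ) (c : ℕ → ℕ) (v : ℕ) : Prop := v ≤ m ∧ ∀ k, v < k → k ≤ m → v ≤ c k

lemma menu_zero {m : ℕ} {c : ℕ → ℕ} : Menu m c 0 := ⟨Nat.zero_le _, fun _ _ _ => Nat.zero_le _⟩
lemma menu_top {m : ℕ} {c : ℕ → ℕ} : Menu m c m :=
  ⟨le_rfl, fun k hk hk' => absurd hk (not_lt.mpr hk')⟩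

/-- L3: suffix values are in the menu of the prefix. -/
lemma suffix_menu (hv : Valid n c) {j : ℕ} (hj : n - Bstat n c + 2 ≤ j) (hjn : j ≤ n) :
    Menu (n - Bstat n c) c (c j) := by
  set ℓ := Bstat n c with hℓ
  set m := n - ℓ with hm
  have hℓn : ℓ ≤ n := Bstat_le
  have hBm1 : BPt n c (m+1) := (Bchar (by omega) (by omega)).mpr (by omega)
  have hcjm : c j ≤ m := by have := hBm1 j (by omega) hjn; omega
  refine ⟨hcjm, fun k hk hk' => ?_⟩
  by_contra hlt
  push_neg at hlt
  -- c k < c j, c j < k ≤ m < j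
  have : c j ≤ c k := hv.2.1 k j (by omega) (by omega) hjn (by omega) (by omega)
  omega

/-- next menu element above `v`. -/
noncomputable def NG (m : ℕ) (c : ℕ → ℕ) (v : ℕ) : ℕ := sInf {x | Menu m c x ∧ v < x}
/-- previous menu element below `u`. -/
noncomputable def PG (m : ℕ) (c : ℕ → ℕ) (u : ℕ) : ℕ := sSup {x | Menu m c x ∧ x < u}

lemma NG_spec {m : ℕ} {c : ℕ → ℕ} {v : ℕ} (hvm : v < m) :
    Menu m c (NG m c v) ∧ v < NG m c v := by
  have hne : ({x | Menu m c x ∧ v < x} : Set ℕ).Nonempty := ⟨m, menu_top, hvm⟩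
  exact Nat.sInf_mem hne

lemma NG_le {m : ℕ} {c : ℕ → ℕ} {v x : ℕ} (hx : Menu m c x) (hvx : v < x) : NG m c v ≤ x :=
  Nat.sInf_le ⟨hx, hvx⟩

lemma PG_spec {m : ℕ} {c : ℕ → ℕ} {u : ℕ} (hu : 1 ≤ u) :
    Menu m c (PG m c u) ∧ PG m c u < u := by
  have hne : ({x | Menu m c x ∧ x < u} : Set ℕ).Nonempty := ⟨0, menu_zero, hu⟩
  have hbdd : BddAbove {x | Menu m c x ∧ x < u} := ⟨u, fun x hx => le_of_lt hx.2⟩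
  exact Nat.sSup_mem hne hbdd

lemma le_PG {m : ℕ} {c : ℕ → ℕ} {u x : ℕ} (hx : Menu m c x) (hxu : x < u) : x ≤ PG m c u :=
  le_csSup ⟨u, fun y hy => le_of_lt hy.2⟩ ⟨hx, hxu⟩

end Struct

/-- Uniform rank formula for `Astat`. -/
lemma Astat_rank {n : ℕ} {c : ℕ → ℕ} (hv : Valid n c) (hn : 1 ≤ n) :
    Astat n c = ((Icc 1 (c n)).filter (Menu (n - Bstat n c) c)).card + 1 := by
  set ℓ := Bstat n c with hℓ
  set m := n - ℓ with hm
  have hℓ1 : 1 ≤ ℓ := Bstat_pos hn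
  have hℓn : ℓ ≤ n := Bstat_le
  have hcnn : c n < n := hv.1 n hn le_rfl
  have hfull : c (m+1) = m := c_at_full hv hn
  have hset : (Icc 1 n).filter (APt n c)
      = insert n (((Icc 1 (c n)).filter (Menu m c))) := by
    ext x
    simp only [mem_filter, mem_Icc, mem_insert]
    constructor
    · rintro ⟨⟨hx1, hxn⟩, hA⟩
      rcases eq_or_lt_of_le hxn with rfl | hxlt
      · exact Or.inl rfl
      · right
        have hxcn : x ≤ c n := hA n hxlt le_rfl
        have hxm : x ≤ m := by
          by_contra hxm
          push_neg at hxm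
          have hB : BPt n c x := (Bchar hx1 hxn).mpr (by omega)
          have h1 := hB (x+1) (by omega) (by omega)
          have h2 := hA (x+1) (by omega) (by omega)
          omega
        exact ⟨⟨hx1, hxcn⟩, hxm, fun k hk hk' => hA k hk (by omega)⟩
    · rintro (rfl | ⟨⟨hx1, hxcn⟩, hMe⟩)
      · exact ⟨⟨hn, le_rfl⟩, fun k hk hk' => absurd hk (not_lt.mpr hk')⟩
      · have hxm : x ≤ m := hMe.1
        refine ⟨⟨hx1, by omega⟩, fun k hk hkn => ?_⟩
        rcases lt_or_ge m k with hk2 | hk2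
        · rcases eq_or_lt_of_le (show m + 1 ≤ k by omega) with heq | hk3
          · rw [← heq, hfull]; exact hxm
          · calc x ≤ c n := hxcn
                 _ ≤ c k := suffix_anti hv (by omega) hkn le_rfl
        · exact hMe.2 k hk hk2
  have hnotmem : n ∉ (Icc 1 (c n)).filter (Menu m c) := by
    simp only [mem_filter, mem_Icc]
    rintro ⟨⟨_, h⟩, _⟩
    omega
  rw [Astat, hset, card_insert_of_notMem hnotmem]


/-- The stat-shifting map `Φ : S(k,ℓ) → S(k+1,ℓ-1)`. -/
noncomputable def Phi (n : ℕ) (c : ℕ → ℕ) : ℕ → ℕ := fun j =>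
  if 1 ≤ j ∧ j ≤ n then
    if j ≤ n - Bstat n c then c j
    else if j = n - Bstat n c + 1 then c (n - Bstat n c + 2)
    else if j = n - Bstat n c + 2 then n - Bstat n c + 1
    else if c j = c (n - Bstat n c + 2) then n - Bstat n c + 1
    else NG (n - Bstat n c) c (c j)
  else 0

section PhiFacts
variable {n : ℕ} {c : ℕ → ℕ}

lemma phi_eval_pre (hj1 : 1 ≤ j) (hj : j ≤ n - Bstat n c) : Phi n c j = c j := by
  have hjn : j ≤ n := le_trans hj (Nat.sub_le _ _)
  unfold Phi
  split_ifs <;> first | rfl | omega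

lemma phi_eval_m1 (h : n - Bstat n c + 1 ≤ n) : Phi n c (n - Bstat n c + 1) = c (n - Bstat n c + 2) := by
  unfold Phi
  split_ifs <;> first | rfl | omega

lemma phi_eval_m2 (h : n - Bstat n c + 2 ≤ n) : Phi n c (n - Bstat n c + 2) = n - Bstat n c + 1 := by
  unfold Phi
  split_ifs <;> first | rfl | omega

lemma phi_eval_suf_eq (hj : n - Bstat n c + 3 ≤ j) (hjn : j ≤ n)
    (he : c j = c (n - Bstat n c + 2)) : Phi n c j = n - Bstat n c + 1 := by
  unfold Phi
  split_ifs <;> first | rfl | omega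

lemma phi_eval_suf_ne (hj : n - Bstat n c + 3 ≤ j) (hjn : j ≤ n)
    (he : c j ≠ c (n - Bstat n c + 2)) : Phi n c j = NG (n - Bstat n c) c (c j) := by
  unfold Phi
  split_ifs <;> first | rfl | omega

lemma phi_eval_out (h : ¬ (1 ≤ j ∧ j ≤ n)) : Phi n c j = 0 := by
  simp only [Phi, if_neg h]

variable (hv : Valid n c) (h2 : 2 ≤ Bstat n c)

lemma phi_w_menu (hv : Valid n c) (h2 : 2 ≤ Bstat n c) :
    Menu (n - Bstat n c) c (c (n - Bstat n c + 2)) := by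
  have hℓn : Bstat n c ≤ n := Bstat_le
  exact suffix_menu hv le_rfl (by omega)

lemma phi_suf_le_w (hv : Valid n c) (h2 : 2 ≤ Bstat n c) {j : ℕ}
    (hj : n - Bstat n c + 2 ≤ j) (hjn : j ≤ n) : c j ≤ c (n - Bstat n c + 2) :=
  suffix_anti hv le_rfl hj hjn

/-- values of Phi on positions ≥ m+1 are ≤ m+1 -/
lemma phi_val_le (hv : Valid n c) (h2 : 2 ≤ Bstat n c) {j : ℕ}
    (hj : n - Bstat n c + 1 ≤ j) (hjn : j ≤ n) : Phi n c j ≤ n - Bstat n c + 1 := by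
  have hwm : c (n - Bstat n c + 2) ≤ n - Bstat n c := (phi_w_menu hv h2).1
  rcases eq_or_lt_of_le hj with heq | h3
  · rw [← heq, phi_eval_m1 (by omega)]; omega
  rcases eq_or_lt_of_le (show n - Bstat n c + 2 ≤ j by omega) with heq | h4
  · rw [← heq, phi_eval_m2 (by omega)]
  · by_cases he : c j = c (n - Bstat n c + 2)
    · rw [phi_eval_suf_eq (by omega) hjn he]
    · rw [phi_eval_suf_ne (by omega) hjn he]
      have hcj : c j ≤ c (n - Bstat n c + 2) := phi_suf_le_w hv h2 (by omega) hjn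
      have := NG_le (phi_w_menu hv h2) (lt_of_le_of_ne hcj he)
      omega

lemma phi_valid (hv : Valid n c) (h2 : 2 ≤ Bstat n c) : Valid n (Phi n c) := by
  have hℓn : Bstat n c ≤ n := Bstat_le
  have hwmenu : Menu (n - Bstat n c) c (c (n - Bstat n c + 2)) := phi_w_menu hv h2
  have hwm : c (n - Bstat n c + 2) ≤ n - Bstat n c := hwmenu.1
  refine ⟨?_, ?_, ?_⟩
  · -- bounds
    intro k hk1 hkn
    rcases le_or_gt k (n - Bstat n c) with h | h
    · rw [phi_eval_pre hk1 h]; exact hv.1 k hk1 hkn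
    · rcases eq_or_lt_of_le (show n - Bstat n c + 1 ≤ k by omega) with heq | h4
      · rw [← heq, phi_eval_m1 (by omega)]
        omega
      · have := phi_val_le hv h2 (by omega) hkn
        omega
  · -- main pairwise condition
    intro j k hj1 hjk hkn h1 h2'
    rcases le_or_gt k (n - Bstat n c) with hk | hk
    · rw [phi_eval_pre (by omega) hk] at h1 ⊢
      rw [phi_eval_pre hj1 (by omega)] at h2' ⊢
      exact hv.2.1 j k hj1 hjk hkn h1 h2'
    rcases eq_or_lt_of_le (show n - Bstat n c + 1 ≤ k by omega) with heq | hk3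
    · rw [← heq] at h1 hkn ⊢
      rw [phi_eval_m1 (by omega)] at h1 ⊢
      rw [phi_eval_pre hj1 (by omega)] at h2' ⊢
      exact hwmenu.2 j h1 (by omega)
    rcases eq_or_lt_of_le (show n - Bstat n c + 2 ≤ k by omega) with heq | hk4
    · rw [← heq] at h1 hkn
      rw [phi_eval_m2 (by omega)] at h1
      omega
    · -- k ≥ m+3
      have hckw : c k ≤ c (n - Bstat n c + 2) := phi_suf_le_w hv h2 (by omega) hkn
      by_cases hek : c k = c (n - Bstat n c + 2)
      · rw [phi_eval_suf_eq (by omega) hkn hek] at h1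
        -- Phi k = m+1 < j forces j ≥ m+2
        rcases le_or_gt j (n - Bstat n c) with hj2 | hj2
        · omega
        rcases eq_or_lt_of_le (show n - Bstat n c + 1 ≤ j by omega) with heqj | hj3
        · omega
        rcases eq_or_lt_of_le (show n - Bstat n c + 2 ≤ j by omega) with heqj | hj4
        · rw [← heqj] at h2'
          rw [phi_eval_m2 (by omega)] at h2'
          omega
        · -- j ≥ m+3 : goal Phi k ≤ Phi j, but premise Phi k < j needs care
          rw [phi_eval_suf_eq (by omega) hkn hek]
          have hcjw : c j ≤ c (n - Bstat n c + 2) := phi_suf_le_w hv h2 (by omega) (by omega)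
          have hckj : c k ≤ c j := suffix_anti hv (by omega) (le_of_lt hjk) hkn
          have hcje : c j = c (n - Bstat n c + 2) := by omega
          rw [phi_eval_suf_eq (by omega) (by omega) hcje]
      · rw [phi_eval_suf_ne (by omega) hkn hek] at h1 ⊢
        have hcklt : c k < c (n - Bstat n c + 2) := lt_of_le_of_ne hckw hek
        have hNGk := NG_spec (v := c k) (c := c) (show c k < n - Bstat n c by omega)
        have hNGkw : NG (n - Bstat n c) c (c k) ≤ c (n - Bstat n c + 2) := NG_le hwmenu hcklt
        rcases le_or_gt j (n - Bstat n c) with hj2 | hj2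
        · rw [phi_eval_pre hj1 hj2] at h2' ⊢
          exact hNGk.1.2 j h1 hj2
        rcases eq_or_lt_of_le (show n - Bstat n c + 1 ≤ j by omega) with heqj | hj3
        · rw [← heqj] at h2' ⊢
          rw [phi_eval_m1 (by omega)] at h2' ⊢
          exact hNGkw
        rcases eq_or_lt_of_le (show n - Bstat n c + 2 ≤ j by omega) with heqj | hj4
        · rw [← heqj] at h2'
          rw [phi_eval_m2 (by omega)] at h2'
          omega
        · have hckj : c k ≤ c j := suffix_anti hv (by omega) (le_of_lt hjk) hkn
          by_cases hej : c j = c (n - Bstat n c + 2)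
          · rw [phi_eval_suf_eq (by omega) (by omega) hej]
            omega
          · rw [phi_eval_suf_ne (by omega) (by omega) hej]
            have hNGj := NG_spec (v := c j) (c := c) (show c j < n - Bstat n c by
              have : c j ≤ c (n - Bstat n c + 2) := phi_suf_le_w hv h2 (by omega) (by omega)
              omega)
            exact NG_le hNGj.1 (by omega)
  · -- support
    intro k hk
    by_contra hcon
    exact hk (phi_eval_out hcon)

lemma phi_bst (hv : Valid n c) (h2 : 2 ≤ Bstat n c) :
    Bstat n (Phi n c) = Bstat n c - 1 := by
  have hℓn : Bstat n c ≤ n := Bstat_le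
  have hset : (Icc 1 n).filter (BPt n (Phi n c)) = Icc (n - Bstat n c + 2) n := by
    ext x
    simp only [mem_filter, mem_Icc]
    constructor
    · rintro ⟨⟨hx1, hxn⟩, hB⟩
      refine ⟨?_, hxn⟩
      by_contra hx
      push_neg at hx
      have := hB (n - Bstat n c + 2) (by omega) (by omega)
      rw [phi_eval_m2 (by omega)] at this
      omega
    · rintro ⟨hx2, hxn⟩
      refine ⟨⟨by omega, hxn⟩, fun k hk hkn => ?_⟩
      have := phi_val_le hv h2 (show n - Bstat n c + 1 ≤ k by omega) hkn
      omega
  rw [Bstat, hset, Nat.card_Icc]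
  omega

lemma phi_ast (hv : Valid n c) (h2 : 2 ≤ Bstat n c) :
    Astat n (Phi n c) = Astat n c + 1 := by
  have hℓn : Bstat n c ≤ n := Bstat_le
  have hvd : Valid n (Phi n c) := phi_valid hv h2
  have hbd : Bstat n (Phi n c) = Bstat n c - 1 := phi_bst hv h2
  have hmd : n - Bstat n (Phi n c) = n - Bstat n c + 1 := by
    have : Bstat n c ≤ n := Bstat_le
    omega
  have hwmenu : Menu (n - Bstat n c) c (c (n - Bstat n c + 2)) := phi_w_menu hv h2
  have hwm : c (n - Bstat n c + 2) ≤ n - Bstat n c := hwmenu.1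
  have hr1 := Astat_rank hvd (show 1 ≤ n by omega)
  have hr2 := Astat_rank hv (show 1 ≤ n by omega)
  rw [hmd] at hr1
  have hmenu_iff : ∀ x, x ≤ n - Bstat n c →
      (Menu (n - Bstat n c + 1) (Phi n c) x ↔
        (Menu (n - Bstat n c) c x ∧ x ≤ c (n - Bstat n c + 2))) := by
    intro x hxm
    constructor
    · intro hM
      have hxw : x ≤ c (n - Bstat n c + 2) := by
        have := hM.2 (n - Bstat n c + 1) (by omega) le_rfl
        rwa [phi_eval_m1 (by omega)] at this
      refine ⟨⟨hxm, fun k hk hkm => ?_⟩, hxw⟩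
      have := hM.2 k hk (by omega)
      rwa [phi_eval_pre (by omega) hkm] at this
    · rintro ⟨hM, hxw⟩
      refine ⟨by omega, fun k hk hkm => ?_⟩
      rcases eq_or_lt_of_le hkm with heq | hklt
      · rw [heq, phi_eval_m1 (by omega)]; exact hxw
      · rw [phi_eval_pre (by omega) (by omega)]
        exact hM.2 k hk (by omega)
  by_cases hcn : c n = c (n - Bstat n c + 2)
  · have hdn : Phi n c n = n - Bstat n c + 1 := by
      rcases eq_or_lt_of_le (show n - Bstat n c + 2 ≤ n by omega) with heq | hlt
      · have h' := phi_eval_m2 (c := c) (show n - Bstat n c + 2 ≤ n by omega)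
        rw [heq] at h'
        exact h'
      · exact phi_eval_suf_eq (by omega) le_rfl hcn
    rw [hdn] at hr1
    have hset : (Icc 1 (n - Bstat n c + 1)).filter (Menu (n - Bstat n c + 1) (Phi n c))
        = insert (n - Bstat n c + 1) ((Icc 1 (c n)).filter (Menu (n - Bstat n c) c)) := by
      ext x
      simp only [mem_filter, mem_Icc, mem_insert]
      constructor
      · rintro ⟨⟨hx1, hx2⟩, hM⟩
        rcases eq_or_lt_of_le hx2 with rfl | hxm
        · exact Or.inl rfl
        · right
          have := (hmenu_iff x (by omega)).mp hM
          rw [hcn]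
          exact ⟨⟨hx1, this.2⟩, this.1⟩
      · rintro (rfl | ⟨⟨hx1, hx2⟩, hM⟩)
        · exact ⟨⟨by omega, le_rfl⟩, ⟨le_rfl, fun k hk hkm => by omega⟩⟩
        · rw [hcn] at hx2
          exact ⟨⟨hx1, by omega⟩, (hmenu_iff x hM.1).mpr ⟨hM, hx2⟩⟩
    have hnm : (n - Bstat n c + 1) ∉ (Icc 1 (c n)).filter (Menu (n - Bstat n c) c) := by
      simp only [mem_filter, mem_Icc]
      rintro ⟨⟨_, h⟩, _⟩
      rw [hcn] at h
      omega
    rw [hset, card_insert_of_notMem hnm] at hr1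
    omega
  · have hn3 : n - Bstat n c + 3 ≤ n := by
      rcases eq_or_lt_of_le (show n - Bstat n c + 2 ≤ n by omega) with heq | hlt
      · exact absurd (congrArg c heq).symm hcn
      · omega
    have hcnw : c n < c (n - Bstat n c + 2) :=
      lt_of_le_of_ne (phi_suf_le_w hv h2 (by omega) le_rfl) hcn
    have hdn : Phi n c n = NG (n - Bstat n c) c (c n) := phi_eval_suf_ne (by omega) le_rfl hcn
    have hNG := NG_spec (v := c n) (c := c) (show c n < n - Bstat n c by omega)
    have hNGw : NG (n - Bstat n c) c (c n) ≤ c (n - Bstat n c + 2) := NG_le hwmenu hcnw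
    rw [hdn] at hr1
    have hset : (Icc 1 (NG (n - Bstat n c) c (c n))).filter (Menu (n - Bstat n c + 1) (Phi n c))
        = insert (NG (n - Bstat n c) c (c n)) ((Icc 1 (c n)).filter (Menu (n - Bstat n c) c)) := by
      ext x
      simp only [mem_filter, mem_Icc, mem_insert]
      constructor
      · rintro ⟨⟨hx1, hx2⟩, hM⟩
        have hxm : x ≤ n - Bstat n c := by omega
        have hx' := (hmenu_iff x hxm).mp hM
        rcases eq_or_lt_of_le hx2 with rfl | hxlt
        · exact Or.inl rfl
        · right
          refine ⟨⟨hx1, ?_⟩, hx'.1⟩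
          by_contra hxcn
          push_neg at hxcn
          have := NG_le hx'.1 hxcn
          omega
      · rintro (rfl | ⟨⟨hx1, hx2⟩, hM⟩)
        · refine ⟨⟨by omega, le_rfl⟩, (hmenu_iff _ (by omega)).mpr ⟨hNG.1, hNGw⟩⟩
        · exact ⟨⟨hx1, by omega⟩, (hmenu_iff x hM.1).mpr ⟨hM, by omega⟩⟩
    have hnm : NG (n - Bstat n c) c (c n) ∉ (Icc 1 (c n)).filter (Menu (n - Bstat n c) c) := by
      simp only [mem_filter, mem_Icc]
      rintro ⟨⟨_, h⟩, _⟩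
      omega
    rw [hset, card_insert_of_notMem hnm] at hr1
    omega

end PhiFacts

/-- The reverse stat-shifting map `Ψ : S(k,ℓ) → S(k-1,ℓ+1)`. -/
noncomputable def Psi (n : ℕ) (c : ℕ → ℕ) : ℕ → ℕ := fun j =>
  if 1 ≤ j ∧ j ≤ n then
    if j ≤ n - Bstat n c - 1 then c j
    else if j = n - Bstat n c then n - Bstat n c - 1
    else if j = n - Bstat n c + 1 then c (n - Bstat n c)
    else if c j = n - Bstat n c then c (n - Bstat n c)
    else PG (n - Bstat n c - 1) c (c j)
  else 0

section PsiFacts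
variable {n : ℕ} {c : ℕ → ℕ}

lemma psi_eval_pre (hj1 : 1 ≤ j) (hj : j ≤ n - Bstat n c - 1) : Psi n c j = c j := by
  have hjn : j ≤ n := le_trans hj (le_trans (Nat.sub_le _ _) (Nat.sub_le _ _))
  unfold Psi
  split_ifs <;> first | rfl | omega

lemma psi_eval_M (h1 : 1 ≤ n - Bstat n c) (h : n - Bstat n c ≤ n) :
    Psi n c (n - Bstat n c) = n - Bstat n c - 1 := by
  unfold Psi
  split_ifs <;> first | rfl | omega

lemma psi_eval_M1 (h : n - Bstat n c + 1 ≤ n) :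
    Psi n c (n - Bstat n c + 1) = c (n - Bstat n c) := by
  unfold Psi
  split_ifs <;> first | rfl | omega

lemma psi_eval_suf_eq (hj : n - Bstat n c + 2 ≤ j) (hjn : j ≤ n)
    (he : c j = n - Bstat n c) : Psi n c j = c (n - Bstat n c) := by
  unfold Psi
  split_ifs <;> first | rfl | omega

lemma psi_eval_suf_ne (hj : n - Bstat n c + 2 ≤ j) (hjn : j ≤ n)
    (he : c j ≠ n - Bstat n c) : Psi n c j = PG (n - Bstat n c - 1) c (c j) := by
  unfold Psi
  split_ifs <;> first | rfl | omega

lemma psi_eval_out (h : ¬ (1 ≤ j ∧ j ≤ n)) : Psi n c j = 0 := by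
  simp only [Psi, if_neg h]

/-- `Astat ≥ 2` forces `Bstat < n`. -/
lemma bstat_lt_of_astat (hv : Valid n c) (hA : 2 ≤ Astat n c) : Bstat n c + 1 ≤ n := by
  have hn : 1 ≤ n := by
    have := Astat_le (n := n) (c := c); omega
  have hBn : Bstat n c ≤ n := Bstat_le
  by_contra hB
  have hBeq : Bstat n c = n := by omega
  -- every x in [1,n-1] is a B-point and hence not an A-point
  have hsub : (Icc 1 n).filter (APt n c) ⊆ {n} := by
    intro x hx
    rw [mem_filter, mem_Icc] at hx
    rw [mem_singleton]
    by_contra hxn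
    have hxlt : x < n := lt_of_le_of_ne hx.1.2 hxn
    have hBx : BPt n c x := by
      rw [Bchar hx.1.1 hx.1.2, hBeq]
      omega
    have h1 := hBx (x+1) (by omega) (by omega)
    have h2 := hx.2 (x+1) (by omega) (by omega)
    omega
  have := card_le_card hsub
  rw [card_singleton] at this
  rw [Astat] at hA
  omega

lemma cn_pos (hv : Valid n c) (hA : 2 ≤ Astat n c) : 1 ≤ c n := by
  have hn : 1 ≤ n := by have := Astat_le (n := n) (c := c); omega
  have := Astat_rank hv hn
  rw [this] at hA
  have hcard : 1 ≤ ((Icc 1 (c n)).filter (Menu (n - Bstat n c) c)).card := by omega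
  obtain ⟨x, hx⟩ := card_pos.mp hcard
  rw [mem_filter, mem_Icc] at hx
  omega

variable (hv : Valid n c) (hA : 2 ≤ Astat n c)

/-- v = c M is in the prefix menu. -/
lemma v_menu (hv : Valid n c) (hA : 2 ≤ Astat n c) :
    Menu (n - Bstat n c - 1) c (c (n - Bstat n c)) := by
  have hn : 1 ≤ n := by have := Astat_le (n := n) (c := c); omega
  have hM1 : 1 ≤ n - Bstat n c := by have := bstat_lt_of_astat hv hA; omega
  have hMn : n - Bstat n c ≤ n := by omega
  have hvlt : c (n - Bstat n c) < n - Bstat n c := hv.1 _ hM1 hMn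
  refine ⟨by omega, fun k hk hkM => ?_⟩
  by_contra hcon
  push_neg at hcon
  have := hv.2.1 k (n - Bstat n c) (by omega) (by omega) hMn (by omega) (by omega)
  omega

/-- suffix values of c are ≤ v and in the small menu (when not = M). -/
lemma psi_suf_facts (hv : Valid n c) (hA : 2 ≤ Astat n c) {j : ℕ}
    (hj : n - Bstat n c + 2 ≤ j) (hjn : j ≤ n) :
    c j ≤ n - Bstat n c ∧ (c j ≠ n - Bstat n c →
      (Menu (n - Bstat n c - 1) c (c j) ∧ c j ≤ c (n - Bstat n c))) := by
  have hn : 1 ≤ n := by have := Astat_le (n := n) (c := c); omega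
  have hM1 : 1 ≤ n - Bstat n c := by have := bstat_lt_of_astat hv hA; omega
  have hMe := suffix_menu hv hj hjn
  refine ⟨hMe.1, fun hne => ?_⟩
  have hlt : c j < n - Bstat n c := lt_of_le_of_ne hMe.1 hne
  have hjv : c j ≤ c (n - Bstat n c) := hMe.2 (n - Bstat n c) hlt le_rfl
  exact ⟨⟨by omega, fun k hk hkM => hMe.2 k hk (by omega)⟩, hjv⟩

lemma psi_valid (hv : Valid n c) (hA : 2 ≤ Astat n c) : Valid n (Psi n c) := by
  have hn : 1 ≤ n := by have := Astat_le (n := n) (c := c); omega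
  have hM1 : 1 ≤ n - Bstat n c := by have := bstat_lt_of_astat hv hA; omega
  have hMn : n - Bstat n c ≤ n := by omega
  have hvm : Menu (n - Bstat n c - 1) c (c (n - Bstat n c)) := v_menu hv hA
  have hvlt : c (n - Bstat n c) ≤ n - Bstat n c - 1 := hvm.1
  have hcn1 : 1 ≤ c n := cn_pos hv hA
  -- suffix values of Psi are in the small menu and ≤ v
  have hsufmenu : ∀ j, n - Bstat n c + 1 ≤ j → j ≤ n →
      Menu (n - Bstat n c - 1) c (Psi n c j) ∧ Psi n c j ≤ c (n - Bstat n c) := by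
    intro j hj hjn
    rcases eq_or_lt_of_le hj with heq | hj2
    · rw [← heq, psi_eval_M1 (by omega)]
      exact ⟨hvm, le_rfl⟩
    · by_cases he : c j = n - Bstat n c
      · rw [psi_eval_suf_eq (by omega) hjn he]
        exact ⟨hvm, le_rfl⟩
      · rw [psi_eval_suf_ne (by omega) hjn he]
        have hf := psi_suf_facts hv hA (show n - Bstat n c + 2 ≤ j by omega) hjn
        have hcj1 : 1 ≤ c j := le_trans hcn1 (suffix_anti hv (by omega) hjn le_rfl)
        have hPG := PG_spec (m := n - Bstat n c - 1) (c := c) hcj1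
        exact ⟨hPG.1, by have := (hf.2 he).2; omega⟩
  refine ⟨?_, ?_, ?_⟩
  · intro k hk1 hkn
    rcases le_or_gt k (n - Bstat n c - 1) with h | h
    · rw [psi_eval_pre hk1 h]; exact hv.1 k hk1 hkn
    · rcases eq_or_lt_of_le (show n - Bstat n c ≤ k by omega) with heq | h2
      · rw [← heq, psi_eval_M hM1 hMn]; omega
      · have := (hsufmenu k (by omega) hkn).2
        omega
  · intro j k hj1 hjk hkn h1 h2'
    rcases le_or_gt k (n - Bstat n c - 1) with hk | hk
    · rw [psi_eval_pre (by omega) hk] at h1 ⊢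
      rw [psi_eval_pre hj1 (by omega)] at h2' ⊢
      exact hv.2.1 j k hj1 hjk hkn h1 h2'
    rcases eq_or_lt_of_le (show n - Bstat n c ≤ k by omega) with heq | hk2
    · -- k = M: value M-1, premise Psi k < j ≤ M-1 impossible
      rw [← heq] at h1 hkn
      rw [psi_eval_M hM1 hMn] at h1
      omega
    · -- k ≥ M+1 : Psi k is in small menu, ≤ v
      have hk' := hsufmenu k (by omega) hkn
      rcases le_or_gt j (n - Bstat n c - 1) with hj2 | hj2
      · rw [psi_eval_pre hj1 hj2] at h2' ⊢
        exact hk'.1.2 j h1 hj2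
      rcases eq_or_lt_of_le (show n - Bstat n c ≤ j by omega) with heqj | hj3
      · rw [← heqj] at h2'
        rw [psi_eval_M hM1 hMn] at h2'
        omega
      rcases eq_or_lt_of_le (show n - Bstat n c + 1 ≤ j by omega) with heqj | hj4
      · rw [← heqj] at h2' ⊢
        rw [psi_eval_M1 (by omega)] at h2' ⊢
        exact hk'.2
      · -- j ≥ M+2 : unconditional decrease
        by_cases hej : c j = n - Bstat n c
        · rw [psi_eval_suf_eq (by omega) (by omega) hej]
          exact hk'.2
        · rw [psi_eval_suf_ne (by omega) (by omega) hej]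
          have hfj := psi_suf_facts hv hA (show n - Bstat n c + 2 ≤ j by omega) (by omega)
          have hckj : c k ≤ c j := suffix_anti hv (by omega) (le_of_lt hjk) hkn
          have hcj1 : 1 ≤ c j := le_trans hcn1 (suffix_anti hv (by omega) (by omega) le_rfl)
          -- Psi k < c j hence ≤ PG (c j)
          rcases eq_or_lt_of_le (show n - Bstat n c + 1 ≤ k by omega) with heqk | hk3
          · rw [← heqk] at h1 ⊢
            rw [psi_eval_M1 (by omega)] at h1 ⊢
            -- Psi k = v ; but j ≥ M+2 > M+1 = k contradicts j < k
            omega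
          · by_cases hek : c k = n - Bstat n c
            · -- c k = M but c k ≤ c j < M, contradiction
              have : c j < n - Bstat n c := by
                have := hfj.2 hej
                omega
              omega
            · rw [psi_eval_suf_ne (by omega) hkn hek] at h1 ⊢
              have hck1 : 1 ≤ c k := le_trans hcn1 (suffix_anti hv (by omega) hkn le_rfl)
              have hPGk := PG_spec (m := n - Bstat n c - 1) (c := c) hck1
              exact le_PG (m := n - Bstat n c - 1) hPGk.1 (by omega)
  · intro k hk
    by_contra hcon
    exact hk (psi_eval_out hcon)

lemma psi_bst (hv : Valid n c) (hA : 2 ≤ Astat n c) :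
    Bstat n (Psi n c) = Bstat n c + 1 := by
  have hn : 1 ≤ n := by have := Astat_le (n := n) (c := c); omega
  have hM1 : 1 ≤ n - Bstat n c := by have := bstat_lt_of_astat hv hA; omega
  have hMn : n - Bstat n c ≤ n := by omega
  have hvm : Menu (n - Bstat n c - 1) c (c (n - Bstat n c)) := v_menu hv hA
  have hvlt : c (n - Bstat n c) ≤ n - Bstat n c - 1 := hvm.1
  have hcn1 : 1 ≤ c n := cn_pos hv hA
  have hsufle : ∀ j, n - Bstat n c + 1 ≤ j → j ≤ n → Psi n c j ≤ c (n - Bstat n c) := by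
    intro j hj hjn
    rcases eq_or_lt_of_le hj with heq | hj2
    · rw [← heq, psi_eval_M1 (by omega)]
    · by_cases he : c j = n - Bstat n c
      · rw [psi_eval_suf_eq (by omega) hjn he]
      · rw [psi_eval_suf_ne (by omega) hjn he]
        have hcj1 : 1 ≤ c j := le_trans hcn1 (suffix_anti hv (by omega) hjn le_rfl)
        have hPG := PG_spec (m := n - Bstat n c - 1) (c := c) hcj1
        have hf := psi_suf_facts hv hA (show n - Bstat n c + 2 ≤ j by omega) hjn
        have := (hf.2 he).2
        omega
  have hset : (Icc 1 n).filter (BPt n (Psi n c)) = Icc (n - Bstat n c) n := by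
    ext x
    simp only [mem_filter, mem_Icc]
    constructor
    · rintro ⟨⟨hx1, hxn⟩, hB⟩
      refine ⟨?_, hxn⟩
      by_contra hx
      push_neg at hx
      have := hB (n - Bstat n c) (by omega) hMn
      rw [psi_eval_M hM1 hMn] at this
      omega
    · rintro ⟨hx2, hxn⟩
      refine ⟨⟨by omega, hxn⟩, fun k hk hkn => ?_⟩
      have := hsufle k (by omega) hkn
      omega
  rw [Bstat, hset, Nat.card_Icc]
  have hBn : Bstat n c ≤ n := Bstat_le
  omega

lemma psi_ast (hv : Valid n c) (hA : 2 ≤ Astat n c) :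
    Astat n (Psi n c) = Astat n c - 1 := by
  have hn : 1 ≤ n := by have := Astat_le (n := n) (c := c); omega
  have hBlt : Bstat n c + 1 ≤ n := bstat_lt_of_astat hv hA
  have hB1 : 1 ≤ Bstat n c := Bstat_pos hn
  have hM1 : 1 ≤ n - Bstat n c := by have := bstat_lt_of_astat hv hA; omega
  have hMn : n - Bstat n c ≤ n := by omega
  have hvm : Menu (n - Bstat n c - 1) c (c (n - Bstat n c)) := v_menu hv hA
  have hvlt : c (n - Bstat n c) ≤ n - Bstat n c - 1 := hvm.1
  have hcn1 : 1 ≤ c n := cn_pos hv hA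
  have hvd : Valid n (Psi n c) := psi_valid hv hA
  have hbd : Bstat n (Psi n c) = Bstat n c + 1 := psi_bst hv hA
  have hmd : n - Bstat n (Psi n c) = n - Bstat n c - 1 := by
    have : Bstat n c + 1 ≤ n := bstat_lt_of_astat hv hA
    omega
  have hr1 := Astat_rank hvd hn
  have hr2 := Astat_rank hv hn
  rw [hmd] at hr1
  -- Menu over Psi prefix = Menu over c prefix
  have hmenu_iff : ∀ x, (Menu (n - Bstat n c - 1) (Psi n c) x ↔ Menu (n - Bstat n c - 1) c x) := by
    intro x
    constructor
    · intro hM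
      refine ⟨hM.1, fun k hk hkM => ?_⟩
      have := hM.2 k hk hkM
      rwa [psi_eval_pre (by omega) hkM] at this
    · intro hM
      refine ⟨hM.1, fun k hk hkM => ?_⟩
      rw [psi_eval_pre (by omega) hkM]
      exact hM.2 k hk hkM
  have hfiltereq : ∀ b : ℕ, (Icc 1 b).filter (Menu (n - Bstat n c - 1) (Psi n c))
      = (Icc 1 b).filter (Menu (n - Bstat n c - 1) c) := by
    intro b
    apply filter_congr
    intro x _
    exact hmenu_iff x
  by_cases hcn : c n = n - Bstat n c
  · -- last value of c is M ; Psi n = v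
    have hen : Psi n c n = c (n - Bstat n c) := by
      rcases eq_or_lt_of_le (show n - Bstat n c + 1 ≤ n by omega) with heq | hlt
      · have h' := psi_eval_M1 (c := c) (show n - Bstat n c + 1 ≤ n by omega)
        rw [heq] at h'
        exact h'
      · exact psi_eval_suf_eq (by omega) le_rfl hcn
    rw [hen, hfiltereq] at hr1
    -- RHS set: Menu M c over [1, M] = insert M (Menu (M-1) c over [1, v])
    rw [hcn] at hr2
    have hset : (Icc 1 (n - Bstat n c)).filter (Menu (n - Bstat n c) c)
        = insert (n - Bstat n c)
            ((Icc 1 (c (n - Bstat n c))).filter (Menu (n - Bstat n c - 1) c)) := by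
      ext x
      simp only [mem_filter, mem_Icc, mem_insert]
      constructor
      · rintro ⟨⟨hx1, hx2⟩, hM⟩
        rcases eq_or_lt_of_le hx2 with rfl | hxlt
        · exact Or.inl rfl
        · right
          have hxv : x ≤ c (n - Bstat n c) := hM.2 (n - Bstat n c) hxlt le_rfl
          exact ⟨⟨hx1, hxv⟩, ⟨by omega, fun k hk hkM => hM.2 k hk (by omega)⟩⟩
      · rintro (rfl | ⟨⟨hx1, hx2⟩, hM⟩)
        · exact ⟨⟨by omega, le_rfl⟩, ⟨le_rfl, fun k hk hkM => by omega⟩⟩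
        · refine ⟨⟨hx1, by omega⟩, ⟨by omega, fun k hk hkM => ?_⟩⟩
          rcases eq_or_lt_of_le hkM with rfl | hklt
          · omega
          · exact hM.2 k hk (by omega)
    have hnm : (n - Bstat n c) ∉
        (Icc 1 (c (n - Bstat n c))).filter (Menu (n - Bstat n c - 1) c) := by
      simp only [mem_filter, mem_Icc]
      rintro ⟨⟨_, h⟩, _⟩
      omega
    rw [hset, card_insert_of_notMem hnm] at hr2
    omega
  · -- c n < M
    have hn2 : n - Bstat n c + 2 ≤ n := by
      rcases eq_or_lt_of_le (show n - Bstat n c + 1 ≤ n by omega) with heq | hlt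
      · exfalso
        apply hcn
        have := c_at_full hv hn
        rw [heq] at this
        exact this
      · omega
    have hMe := suffix_menu hv (show n - Bstat n c + 2 ≤ n by omega) le_rfl
    have hcnM : c n < n - Bstat n c := lt_of_le_of_ne hMe.1 hcn
    have hcnv : c n ≤ c (n - Bstat n c) := hMe.2 (n - Bstat n c) hcnM le_rfl
    have hen : Psi n c n = PG (n - Bstat n c - 1) c (c n) :=
      psi_eval_suf_ne (by omega) le_rfl hcn
    have hPG := PG_spec (m := n - Bstat n c - 1) (c := c) hcn1
    rw [hen, hfiltereq] at hr1
    have hset : (Icc 1 (c n)).filter (Menu (n - Bstat n c) c)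
        = insert (c n)
            ((Icc 1 (PG (n - Bstat n c - 1) c (c n))).filter (Menu (n - Bstat n c - 1) c)) := by
      ext x
      simp only [mem_filter, mem_Icc, mem_insert]
      constructor
      · rintro ⟨⟨hx1, hx2⟩, hM⟩
        rcases eq_or_lt_of_le hx2 with rfl | hxlt
        · exact Or.inl rfl
        · right
          have hxM : x < n - Bstat n c := by omega
          have hxsmall : Menu (n - Bstat n c - 1) c x :=
            ⟨by omega, fun k hk hkM => hM.2 k hk (by omega)⟩
          exact ⟨⟨hx1, le_PG hxsmall hxlt⟩, hxsmall⟩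
      · rintro (rfl | ⟨⟨hx1, hx2⟩, hM⟩)
        · exact ⟨⟨hcn1, le_rfl⟩, hMe⟩
        · refine ⟨⟨hx1, by omega⟩, ⟨by omega, fun k hk hkM => ?_⟩⟩
          rcases eq_or_lt_of_le hkM with rfl | hklt
          · omega
          · exact hM.2 k hk (by omega)
    have hnm : c n ∉
        (Icc 1 (PG (n - Bstat n c - 1) c (c n))).filter (Menu (n - Bstat n c - 1) c) := by
      simp only [mem_filter, mem_Icc]
      rintro ⟨⟨_, h⟩, _⟩
      omega
    rw [hset, card_insert_of_notMem hnm] at hr2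
    omega

end PsiFacts

section Inj
variable {n : ℕ}

lemma menu_congr {m : ℕ} {c1 c2 : ℕ → ℕ} (h : ∀ k, 1 ≤ k → k ≤ m → c1 k = c2 k) {x : ℕ} :
    Menu m c1 x ↔ Menu m c2 x := by
  unfold Menu
  constructor <;> rintro ⟨h1, h2⟩ <;> refine ⟨h1, fun k hk hkm => ?_⟩
  · rw [← h k (by omega) hkm]; exact h2 k hk hkm
  · rw [h k (by omega) hkm]; exact h2 k hk hkm

lemma NG_congr {m : ℕ} {c1 c2 : ℕ → ℕ} (h : ∀ k, 1 ≤ k → k ≤ m → c1 k = c2 k) (v : ℕ) :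
    NG m c1 v = NG m c2 v := by
  unfold NG
  congr 1
  ext x
  simp only [Set.mem_setOf_eq]
  rw [menu_congr h]

lemma PG_congr {m : ℕ} {c1 c2 : ℕ → ℕ} (h : ∀ k, 1 ≤ k → k ≤ m → c1 k = c2 k) (u : ℕ) :
    PG m c1 u = PG m c2 u := by
  unfold PG
  congr 1
  ext x
  simp only [Set.mem_setOf_eq]
  rw [menu_congr h]

lemma phi_inj {c1 c2 : ℕ → ℕ} (hv1 : Valid n c1) (hv2 : Valid n c2)
    (hb : Bstat n c1 = Bstat n c2) (h2 : 2 ≤ Bstat n c1)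
    (heq : Phi n c1 = Phi n c2) : c1 = c2 := by
  have hl2 : 2 ≤ Bstat n c2 := by omega
  have hln : Bstat n c1 ≤ n := Bstat_le
  have hmm : n - Bstat n c1 = n - Bstat n c2 := by omega
  -- prefix equality
  have hpre : ∀ j, 1 ≤ j → j ≤ n - Bstat n c1 → c1 j = c2 j := by
    intro j hj1 hj
    have e1 : Phi n c1 j = c1 j := phi_eval_pre hj1 hj
    have e2 : Phi n c2 j = c2 j := phi_eval_pre hj1 (by omega)
    rw [← e1, ← e2, heq]
  -- value w
  have hw : c1 (n - Bstat n c1 + 2) = c2 (n - Bstat n c2 + 2) := by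
    have e1 : Phi n c1 (n - Bstat n c1 + 1) = c1 (n - Bstat n c1 + 2) := phi_eval_m1 (by omega)
    have e2 : Phi n c2 (n - Bstat n c2 + 1) = c2 (n - Bstat n c2 + 2) := phi_eval_m1 (by omega)
    rw [← e1, ← e2, heq, hmm]
  funext j
  by_cases hjn : 1 ≤ j ∧ j ≤ n
  · rcases le_or_gt j (n - Bstat n c1) with hj | hj
    · exact hpre j hjn.1 hj
    rcases eq_or_lt_of_le (show n - Bstat n c1 + 1 ≤ j by omega) with heqj | hj2
    · rw [← heqj]
      have f1 : c1 (n - Bstat n c1 + 1) = n - Bstat n c1 := c_at_full hv1 (by omega)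
      have f2 : c2 (n - Bstat n c2 + 1) = n - Bstat n c2 := c_at_full hv2 (by omega)
      rw [← hb] at f2
      rw [f1, f2]
    rcases eq_or_lt_of_le (show n - Bstat n c1 + 2 ≤ j by omega) with heqj | hj3
    · rw [← heqj]; rw [hmm] at hw ⊢; exact hw
    · -- suffix position, j ≥ m+3
      have hs1 : c1 j ≤ c1 (n - Bstat n c1 + 2) := phi_suf_le_w hv1 h2 (by omega) hjn.2
      have hs2 : c2 j ≤ c2 (n - Bstat n c2 + 2) := phi_suf_le_w hv2 hl2 (by omega) hjn.2
      have hm1 : Menu (n - Bstat n c1) c1 (c1 j) := suffix_menu hv1 (by omega) hjn.2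
      have hm2 : Menu (n - Bstat n c2) c2 (c2 j) := suffix_menu hv2 (by omega) hjn.2
      have hwm1 : Menu (n - Bstat n c1) c1 (c1 (n - Bstat n c1 + 2)) := phi_w_menu hv1 h2
      by_cases he1 : c1 j = c1 (n - Bstat n c1 + 2)
      · by_cases he2 : c2 j = c2 (n - Bstat n c2 + 2)
        · rw [he1, he2, ← hw, hmm]
        · exfalso
          have p1 : Phi n c1 j = n - Bstat n c1 + 1 := phi_eval_suf_eq (by omega) hjn.2 he1
          have p2 : Phi n c2 j = NG (n - Bstat n c2) c2 (c2 j) :=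
            phi_eval_suf_ne (by omega) hjn.2 he2
          have hlt2 : c2 j < c2 (n - Bstat n c2 + 2) := lt_of_le_of_ne hs2 he2
          have hub : NG (n - Bstat n c2) c2 (c2 j) ≤ c2 (n - Bstat n c2 + 2) :=
            NG_le (phi_w_menu hv2 hl2) hlt2
          have hwb : c2 (n - Bstat n c2 + 2) ≤ n - Bstat n c2 := (phi_w_menu hv2 hl2).1
          have : Phi n c1 j = Phi n c2 j := by rw [heq]
          omega
      · by_cases he2 : c2 j = c2 (n - Bstat n c2 + 2)
        · exfalso
          have p1 : Phi n c1 j = NG (n - Bstat n c1) c1 (c1 j) :=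
            phi_eval_suf_ne (by omega) hjn.2 he1
          have p2 : Phi n c2 j = n - Bstat n c2 + 1 := phi_eval_suf_eq (by omega) hjn.2 he2
          have hlt1 : c1 j < c1 (n - Bstat n c1 + 2) := lt_of_le_of_ne hs1 he1
          have hub : NG (n - Bstat n c1) c1 (c1 j) ≤ c1 (n - Bstat n c1 + 2) :=
            NG_le hwm1 hlt1
          have hwb : c1 (n - Bstat n c1 + 2) ≤ n - Bstat n c1 := hwm1.1
          have : Phi n c1 j = Phi n c2 j := by rw [heq]
          omega
        · have p1 : Phi n c1 j = NG (n - Bstat n c1) c1 (c1 j) :=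
            phi_eval_suf_ne (by omega) hjn.2 he1
          have p2 : Phi n c2 j = NG (n - Bstat n c2) c2 (c2 j) :=
            phi_eval_suf_ne (by omega) hjn.2 he2
          -- translate c2's menu to c1
          have hpre' : ∀ k, 1 ≤ k → k ≤ n - Bstat n c1 → c1 k = c2 k := hpre
          have hm2' : Menu (n - Bstat n c1) c1 (c2 j) := by
            rw [menu_congr hpre']
            rw [hmm]
            exact hm2
          have hNG2 : NG (n - Bstat n c2) c2 (c2 j) = NG (n - Bstat n c1) c1 (c2 j) := by
            rw [← hb]
            exact (NG_congr hpre' _).symm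
          have hEQ : NG (n - Bstat n c1) c1 (c1 j) = NG (n - Bstat n c1) c1 (c2 j) := by
            have : Phi n c1 j = Phi n c2 j := by rw [heq]
            rw [p1, p2, hNG2] at this
            exact this
          have hwb1 : c1 (n - Bstat n c1 + 2) ≤ n - Bstat n c1 := hwm1.1
          have hwb2 : c2 (n - Bstat n c2 + 2) ≤ n - Bstat n c2 := (phi_w_menu hv2 hl2).1
          rcases lt_trichotomy (c1 j) (c2 j) with hlt | heqv | hlt
          · exfalso
            have h1' : NG (n - Bstat n c1) c1 (c1 j) ≤ c2 j := NG_le hm2' hlt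
            have h2' := NG_spec (c := c1) (v := c2 j) (show c2 j < n - Bstat n c1 by
              have hy : c2 j < c2 (n - Bstat n c2 + 2) := lt_of_le_of_ne hs2 he2
              omega)
            omega
          · exact heqv
          · exfalso
            have hm1' : Menu (n - Bstat n c1) c1 (c1 j) := hm1
            have h1' : NG (n - Bstat n c1) c1 (c2 j) ≤ c1 j := NG_le hm1' hlt
            have h2' := NG_spec (c := c1) (v := c1 j) (show c1 j < n - Bstat n c1 by
              have hy : c1 j < c1 (n - Bstat n c1 + 2) := lt_of_le_of_ne hs1 he1
              omega)
            omega
  · have z1 : c1 j = 0 := by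
      by_contra hz; exact hjn (hv1.2.2 j hz)
    have z2 : c2 j = 0 := by
      by_contra hz; exact hjn (hv2.2.2 j hz)
    rw [z1, z2]

lemma psi_inj {c1 c2 : ℕ → ℕ} (hv1 : Valid n c1) (hv2 : Valid n c2)
    (hb : Bstat n c1 = Bstat n c2) (hA1 : 2 ≤ Astat n c1) (hA2 : 2 ≤ Astat n c2)
    (heq : Psi n c1 = Psi n c2) : c1 = c2 := by
  have hn : 1 ≤ n := by have := Astat_le (n := n) (c := c1); omega
  have hBlt : Bstat n c1 + 1 ≤ n := bstat_lt_of_astat hv1 hA1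
  have hB1 : 1 ≤ Bstat n c1 := Bstat_pos hn
  have hmm : n - Bstat n c1 = n - Bstat n c2 := by omega
  have hM1 : 1 ≤ n - Bstat n c1 := by omega
  have hpre : ∀ j, 1 ≤ j → j ≤ n - Bstat n c1 - 1 → c1 j = c2 j := by
    intro j hj1 hj
    have e1 : Psi n c1 j = c1 j := psi_eval_pre hj1 hj
    have e2 : Psi n c2 j = c2 j := psi_eval_pre hj1 (by omega)
    rw [← e1, ← e2, heq]
  have hvv : c1 (n - Bstat n c1) = c2 (n - Bstat n c2) := by
    have e1 : Psi n c1 (n - Bstat n c1 + 1) = c1 (n - Bstat n c1) := psi_eval_M1 (by omega)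
    have e2 : Psi n c2 (n - Bstat n c2 + 1) = c2 (n - Bstat n c2) := psi_eval_M1 (by omega)
    rw [← e1, ← e2, heq, hmm]
  have hv1v : c1 (n - Bstat n c1) ≤ n - Bstat n c1 - 1 := by
    have := hv1.1 (n - Bstat n c1) (by omega) (by omega)
    omega
  have hc1n : 1 ≤ c1 n := cn_pos hv1 hA1
  have hc2n : 1 ≤ c2 n := cn_pos hv2 hA2
  funext j
  by_cases hjn : 1 ≤ j ∧ j ≤ n
  · rcases le_or_gt j (n - Bstat n c1 - 1) with hj | hj
    · exact hpre j hjn.1 hj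
    rcases eq_or_lt_of_le (show n - Bstat n c1 ≤ j by omega) with heqj | hj2
    · rw [← heqj]; rw [hmm] at hvv ⊢; exact hvv
    rcases eq_or_lt_of_le (show n - Bstat n c1 + 1 ≤ j by omega) with heqj | hj3
    · rw [← heqj]
      have f1 : c1 (n - Bstat n c1 + 1) = n - Bstat n c1 := c_at_full hv1 hn
      have f2 : c2 (n - Bstat n c2 + 1) = n - Bstat n c2 := c_at_full hv2 hn
      rw [← hb] at f2
      rw [f1, f2]
    · -- suffix position j ≥ M+2
      have hf1 := psi_suf_facts hv1 hA1 (show n - Bstat n c1 + 2 ≤ j by omega) hjn.2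
      have hf2 := psi_suf_facts hv2 hA2 (show n - Bstat n c2 + 2 ≤ j by omega) hjn.2
      have hc1j : 1 ≤ c1 j := le_trans hc1n (suffix_anti hv1 (by omega) hjn.2 le_rfl)
      have hc2j : 1 ≤ c2 j := le_trans hc2n (suffix_anti hv2 (by omega) hjn.2 le_rfl)
      by_cases he1 : c1 j = n - Bstat n c1
      · by_cases he2 : c2 j = n - Bstat n c2
        · rw [he1, he2, hmm]
        · exfalso
          have p1 : Psi n c1 j = c1 (n - Bstat n c1) := psi_eval_suf_eq (by omega) hjn.2 he1
          have p2 : Psi n c2 j = PG (n - Bstat n c2 - 1) c2 (c2 j) :=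
            psi_eval_suf_ne (by omega) hjn.2 he2
          have hPG2 := PG_spec (m := n - Bstat n c2 - 1) (c := c2) hc2j
          have hlev : c2 j ≤ c2 (n - Bstat n c2) := (hf2.2 he2).2
          have hthis : Psi n c1 j = Psi n c2 j := by rw [heq]
          rw [p1, p2, hvv] at hthis
          omega
      · by_cases he2 : c2 j = n - Bstat n c2
        · exfalso
          have p1 : Psi n c1 j = PG (n - Bstat n c1 - 1) c1 (c1 j) :=
            psi_eval_suf_ne (by omega) hjn.2 he1
          have p2 : Psi n c2 j = c2 (n - Bstat n c2) := psi_eval_suf_eq (by omega) hjn.2 he2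
          have hPG1 := PG_spec (m := n - Bstat n c1 - 1) (c := c1) hc1j
          have hlev : c1 j ≤ c1 (n - Bstat n c1) := (hf1.2 he1).2
          have hthis : Psi n c1 j = Psi n c2 j := by rw [heq]
          rw [p1, p2, ← hvv] at hthis
          omega
        · have p1 : Psi n c1 j = PG (n - Bstat n c1 - 1) c1 (c1 j) :=
            psi_eval_suf_ne (by omega) hjn.2 he1
          have p2 : Psi n c2 j = PG (n - Bstat n c2 - 1) c2 (c2 j) :=
            psi_eval_suf_ne (by omega) hjn.2 he2
          have hpre' : ∀ k, 1 ≤ k → k ≤ n - Bstat n c1 - 1 → c1 k = c2 k := hpre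
          have hm1 : Menu (n - Bstat n c1 - 1) c1 (c1 j) := (hf1.2 he1).1
          have hm2 : Menu (n - Bstat n c1 - 1) c1 (c2 j) := by
            rw [menu_congr hpre']
            have := (hf2.2 he2).1
            rw [hmm]
            exact this
          have hPG2 : PG (n - Bstat n c2 - 1) c2 (c2 j) = PG (n - Bstat n c1 - 1) c1 (c2 j) := by
            rw [← hb]
            exact (PG_congr hpre' _).symm
          have hEQ : PG (n - Bstat n c1 - 1) c1 (c1 j) = PG (n - Bstat n c1 - 1) c1 (c2 j) := by
            have : Psi n c1 j = Psi n c2 j := by rw [heq]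
            rw [p1, p2, hPG2] at this
            exact this
          rcases lt_trichotomy (c1 j) (c2 j) with hlt | heqv | hlt
          · exfalso
            have h1' : c1 j ≤ PG (n - Bstat n c1 - 1) c1 (c2 j) := le_PG hm1 hlt
            have h2' := PG_spec (m := n - Bstat n c1 - 1) (c := c1) hc1j
            omega
          · exact heqv
          · exfalso
            have h1' : c2 j ≤ PG (n - Bstat n c1 - 1) c1 (c1 j) := le_PG hm2 hlt
            have h2' := PG_spec (m := n - Bstat n c1 - 1) (c := c1) hc2j
            have h2'' := PG_spec (m := n - Bstat n c1 - 1) (c := c1) (u := c1 j) (by omega)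
            omega
  · have z1 : c1 j = 0 := by
      by_contra hz; exact hjn (hv1.2.2 j hz)
    have z2 : c2 j = 0 := by
      by_contra hz; exact hjn (hv2.2.2 j hz)
    rw [z1, z2]

end Inj

/-- The set of valid sequences with prescribed statistics. -/
def SSet (n k l : ℕ) : Type :=
  {c : ℕ → ℕ // Valid n c ∧ Astat n c = k ∧ Bstat n c = l}

instance SSet.finite' (n k l : ℕ) :
    Finite {c : ℕ → ℕ // Valid n c ∧ Astat n c = k ∧ Bstat n c = l} := by
  have hval : ∀ c : {c : ℕ → ℕ // Valid n c ∧ Astat n c = k ∧ Bstat n c = l},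
      ∀ j, j ≤ n → c.1 j ≤ n := by
    intro c j hj
    by_cases hz : c.1 j = 0
    · omega
    · have h1 := c.2.1.2.2 j hz
      have h2 := c.2.1.1 j h1.1 h1.2
      omega
  apply Finite.of_injective
    (f := fun c : {c : ℕ → ℕ // Valid n c ∧ Astat n c = k ∧ Bstat n c = l} =>
      (fun i : Fin (n+1) => (⟨c.1 i.val % (n+1),
      Nat.mod_lt _ (by omega)⟩ : Fin (n+1))))
  intro c1 c2 h
  apply Subtype.ext
  funext j
  by_cases hjn : j ≤ n
  · have := congrFun h ⟨j, by omega⟩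
    simp only [Fin.mk.injEq] at this
    rw [Nat.mod_eq_of_lt (by have := hval c1 j hjn; omega),
        Nat.mod_eq_of_lt (by have := hval c2 j hjn; omega)] at this
    exact this
  · have z1 : c1.1 j = 0 := by
      by_contra hz; exact hjn (c1.2.1.2.2 j hz).2
    have z2 : c2.1 j = 0 := by
      by_contra hz; exact hjn (c2.2.1.2.2 j hz).2
    rw [z1, z2]

instance SSet.finite (n k l : ℕ) : Finite (SSet n k l) := SSet.finite' n k l

lemma card_step (n k l : ℕ) (hk : 1 ≤ k) (hl : 2 ≤ l) :
    Nat.card (SSet n k l) = Nat.card (SSet n (k+1) (l-1)) := by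
  apply le_antisymm
  · have hinj : Function.Injective
        (fun c : SSet n k l => (⟨Phi n c.1, by
          obtain ⟨c, hv, ha, hb⟩ := c
          have h2 : 2 ≤ Bstat n c := by omega
          exact ⟨phi_valid hv h2, by rw [phi_ast hv h2, ha], by rw [phi_bst hv h2, hb]⟩⟩ :
          SSet n (k+1) (l-1))) := by
      intro c1 c2 h
      obtain ⟨hv1, ha1, hb1⟩ := c1.2
      obtain ⟨hv2, ha2, hb2⟩ := c2.2
      simp only [Subtype.mk.injEq] at h
      exact Subtype.ext (phi_inj hv1 hv2 (by omega) (by omega) h)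
    exact Nat.card_le_card_of_injective _ hinj
  · have hinj : Function.Injective
        (fun c : SSet n (k+1) (l-1) => (⟨Psi n c.1, by
          obtain ⟨c, hv, ha, hb⟩ := c
          have h2 : 2 ≤ Astat n c := by omega
          exact ⟨psi_valid hv h2, by rw [psi_ast hv h2, ha]; omega,
            by rw [psi_bst hv h2, hb]; omega⟩⟩ : SSet n k l)) := by
      intro c1 c2 h
      obtain ⟨hv1, ha1, hb1⟩ := c1.2
      obtain ⟨hv2, ha2, hb2⟩ := c2.2
      simp only [Subtype.mk.injEq] at h
      exact Subtype.ext (psi_inj hv1 hv2 (by omega) (by omega) (by omega) h)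
    exact Nat.card_le_card_of_injective _ hinj

lemma card_chain (n : ℕ) : ∀ l k, 1 ≤ k → 1 ≤ l →
    Nat.card (SSet n k l) = Nat.card (SSet n (k + l - 1) 1) := by
  intro l
  induction l with
  | zero => omega
  | succ l ih =>
    intro k hk hl
    rcases Nat.eq_zero_or_pos l with rfl | hl1
    · simp
    · have h1 : Nat.card (SSet n k (l+1)) = Nat.card (SSet n (k+1) l) := by
        have := card_step n k (l+1) hk (by omega)
        simpa using this
      rw [h1, ih (k+1) (by omega) hl1]
      have : k + 1 + l - 1 = k + (l + 1) - 1 := by omega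
      rw [this]

lemma sset_empty_left (n l : ℕ) (hl : 1 ≤ l) : IsEmpty (SSet n 0 l) := by
  constructor
  rintro ⟨c, hv, ha, hb⟩
  rcases Nat.eq_zero_or_pos n with rfl | hn
  · have : Bstat 0 c ≤ 0 := Bstat_le
    omega
  · have := Astat_pos (n := n) (c := c) hn
    omega

lemma sset_empty_right (n l : ℕ) (hl : 1 ≤ l) : IsEmpty (SSet n l 0) := by
  constructor
  rintro ⟨c, hv, ha, hb⟩
  rcases Nat.eq_zero_or_pos n with rfl | hn
  · have : Astat 0 c ≤ 0 := Astat_le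
    omega
  · have := Bstat_pos (n := n) (c := c) hn
    omega

lemma card_symm (n k l : ℕ) : Nat.card (SSet n k l) = Nat.card (SSet n l k) := by
  rcases Nat.eq_zero_or_pos k with rfl | hk
  · rcases Nat.eq_zero_or_pos l with rfl | hl
    · rfl
    · haveI i1 := sset_empty_left n l hl
      haveI i2 := sset_empty_right n l hl
      rw [Nat.card_of_isEmpty, Nat.card_of_isEmpty]
  · rcases Nat.eq_zero_or_pos l with rfl | hl
    · haveI i1 := sset_empty_right n k hk
      haveI i2 := sset_empty_left n k hk
      rw [Nat.card_of_isEmpty, Nat.card_of_isEmpty]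
    · rw [card_chain n l k hk hl, card_chain n k l hl hk]
      have : k + l - 1 = l + k - 1 := by omega
      rw [this]


section Pairs
variable {n : ℕ}

/-- The union order `P = S ∪ R` of a C1-pair. -/
def Pord (p : C1PairsOn n) (x y : Fin n) : Prop := p.1.1 x y ∨ p.1.2 x y

lemma S_ne {p : C1PairsOn n} {x y : Fin n} (h : p.1.1 x y) : x ≠ y := by
  rintro rfl; exact p.2.1.1 x h

lemma R_ne {p : C1PairsOn n} {x y : Fin n} (h : p.1.2 x y) : x ≠ y := by
  rintro rfl; exact p.2.2.1.1 x h

lemma not_both {p : C1PairsOn n} {x y : Fin n} (hxy : x ≠ y)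
    (hs : Cmp p.1.1 x y) (hr : Cmp p.1.2 x y) : False := by
  rcases p.2.2.2.1 x y hxy with ⟨_, h⟩ | ⟨_, h⟩
  · exact h hr
  · exact h hs

lemma pord_irrefl {p : C1PairsOn n} (x : Fin n) : ¬ Pord p x x := by
  rintro (h | h)
  · exact p.2.1.1 x h
  · exact p.2.2.1.1 x h

lemma pord_total {p : C1PairsOn n} {x y : Fin n} (hxy : x ≠ y) :
    Pord p x y ∨ Pord p y x := by
  rcases p.2.2.2.1 x y hxy with ⟨h, _⟩ | ⟨h, _⟩
  · rcases h with h | h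
    · exact Or.inl (Or.inl h)
    · exact Or.inr (Or.inl h)
  · rcases h with h | h
    · exact Or.inl (Or.inr h)
    · exact Or.inr (Or.inr h)

lemma pord_trans {p : C1PairsOn n} {x y z : Fin n}
    (h1 : Pord p x y) (h2 : Pord p y z) : Pord p x z := by
  have hS := p.2.1
  have hR := p.2.2.1
  have hXor := p.2.2.2.1
  have hAx := p.2.2.2.2
  rcases h1 with h1 | h1 <;> rcases h2 with h2 | h2
  · exact Or.inl (hS.2 h1 h2)
  · -- S x y, R y z
    have hxy := S_ne h1
    have hyz := R_ne h2
    have hxz : x ≠ z := by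
      rintro rfl
      exact not_both hxy (Or.inl h1) (Or.inr h2)
    exact Or.inr (hAx x y z hxy hyz hxz h1 h2)
  · -- R x y, S y z
    have hxy := R_ne h1
    have hyz := S_ne h2
    have hxz : x ≠ z := by
      rintro rfl
      exact not_both hxy (Or.inr h2) (Or.inl h1)
    rcases hXor x z hxz with ⟨h, _⟩ | ⟨h, _⟩
    · rcases h with h | h
      · exact Or.inl h
      · -- S z x : then S y x, contradiction with R x y
        exfalso
        exact not_both hxy (Or.inr (hS.2 h2 h)) (Or.inl h1)
    · rcases h with h | h
      · exact Or.inr h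
      · -- R z x : then R z y, contradiction with S y z
        exfalso
        exact not_both hyz (Or.inl h2) (Or.inr (hR.2 h h1))
  · exact Or.inr (hR.2 h1 h2)

lemma pord_asymm {p : C1PairsOn n} {x y : Fin n}
    (h1 : Pord p x y) (h2 : Pord p y x) : False := by
  have hxy : x ≠ y := by
    rintro rfl; exact pord_irrefl x h1
  rcases h1 with h1 | h1 <;> rcases h2 with h2 | h2
  · exact p.2.1.1 x (p.2.1.2 h1 h2)
  · exact not_both hxy (Or.inl h1) (Or.inr h2)
  · exact not_both hxy (Or.inr h2) (Or.inl h1)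
  · exact p.2.2.1.1 x (p.2.2.1.2 h1 h2)

lemma S_iff {p : C1PairsOn n} {x y : Fin n} :
    p.1.1 x y ↔ (Pord p x y ∧ ¬ p.1.2 x y) := by
  constructor
  · intro h
    refine ⟨Or.inl h, fun hr => ?_⟩
    exact not_both (S_ne h) (Or.inl h) (Or.inl hr)
  · rintro ⟨(h | h), hr⟩
    · exact h
    · exact absurd h hr

/-- Rank of an element in the union order. -/
noncomputable def rho (p : C1PairsOn n) (x : Fin n) : Fin n :=
  ⟨(univ.filter (fun z => Pord p z x)).card, by
    have hsub : (univ.filter (fun z => Pord p z x)) ⊆ univ.erase x := by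
      intro z hz
      rw [mem_filter] at hz
      rw [mem_erase]
      refine ⟨fun hzx => ?_, mem_univ z⟩
      subst hzx
      exact pord_irrefl z hz.2
    have := card_le_card hsub
    rw [card_erase_of_mem (mem_univ x), card_univ, Fintype.card_fin] at this
    have hn : 0 < n := Fin.pos x
    omega⟩

lemma rho_lt_of_pord {p : C1PairsOn n} {x y : Fin n} (h : Pord p x y) :
    rho p x < rho p y := by
  have hsub : (univ.filter (fun z => Pord p z x)) ⊂ (univ.filter (fun z => Pord p z y)) := by
    constructor
    · intro z hz
      rw [mem_filter] at hz ⊢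
      exact ⟨mem_univ z, pord_trans hz.2 h⟩
    · intro hsub'
      have hx : x ∈ (univ.filter (fun z => Pord p z y)) := by
        rw [mem_filter]; exact ⟨mem_univ x, h⟩
      have := hsub' hx
      rw [mem_filter] at this
      exact pord_irrefl x this.2
  exact card_lt_card hsub

lemma pord_iff_rho_lt {p : C1PairsOn n} {x y : Fin n} :
    Pord p x y ↔ rho p x < rho p y := by
  constructor
  · exact rho_lt_of_pord
  · intro h
    by_contra hp
    have hxy : x ≠ y := by
      rintro rfl; exact lt_irrefl _ h
    rcases pord_total hxy with h' | h'
    · exact hp h'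
    · exact absurd h (not_lt.mpr (le_of_lt (rho_lt_of_pord h')))

lemma rho_inj {p : C1PairsOn n} : Function.Injective (rho p) := by
  intro x y h
  by_contra hxy
  rcases pord_total (p := p) hxy with h' | h'
  · exact absurd h (ne_of_lt (rho_lt_of_pord h'))
  · exact absurd h.symm (ne_of_lt (rho_lt_of_pord h'))

lemma rho_bij {p : C1PairsOn n} : Function.Bijective (rho p) :=
  Finite.injective_iff_bijective.mp rho_inj

/-- reindexing a filter count along a bijection -/
lemma card_filter_comp {f : Fin n → Fin n} (hf : Function.Bijective f) (Q : Fin n → Prop) :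
    (univ.filter (fun z => Q (f z))).card = (univ.filter Q).card := by
  apply card_bij (fun z _ => f z)
  · intro z hz
    rw [mem_filter] at hz ⊢
    exact ⟨mem_univ _, hz.2⟩
  · intro a ha b hb hab
    exact hf.1 hab
  · intro b hb
    rw [mem_filter] at hb
    obtain ⟨a, ha⟩ := hf.2 b
    refine ⟨a, by rw [mem_filter]; exact ⟨mem_univ _, by rw [ha]; exact hb.2⟩, ha⟩

lemma card_val_lt {t : ℕ} (ht : t ≤ n) :
    (univ.filter (fun i : Fin n => i.val < t)).card = t := by
  conv_rhs => rw [← Finset.card_range t]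
  apply card_bij (fun (i : Fin n) _ => i.val)
  · intro i hi
    rw [mem_filter] at hi
    rw [mem_range]
    exact hi.2
  · intro a _ b _ hab
    exact Fin.ext hab
  · intro b hb
    rw [mem_range] at hb
    exact ⟨⟨b, by omega⟩, by rw [mem_filter]; exact ⟨mem_univ _, hb⟩, rfl⟩

lemma card_rank_lt {p : C1PairsOn n} {v : ℕ} (hv : v ≤ n) :
    (univ.filter (fun z : Fin n => (rho p z).val < v)).card = v := by
  conv_rhs => rw [← Finset.card_range v]
  apply card_bij (fun z _ => (rho p z).val)
  · intro a ha
    rw [mem_filter] at ha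
    rw [mem_range]
    exact ha.2
  · intro a _ b _ hab
    exact rho_inj (Fin.ext hab)
  · intro b hb
    rw [mem_range] at hb
    obtain ⟨a, ha⟩ := (rho_bij (p := p)).2 ⟨b, by omega⟩
    refine ⟨a, ?_, ?_⟩
    · rw [mem_filter]
      refine ⟨mem_univ _, ?_⟩
      rw [ha]
      exact hb
    · rw [ha]

lemma card_rank_le {p : C1PairsOn n} {v : ℕ} (hv : v < n) :
    (univ.filter (fun z : Fin n => (rho p z).val ≤ v)).card = v + 1 := by
  have : (univ.filter (fun z : Fin n => (rho p z).val ≤ v))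
      = (univ.filter (fun z : Fin n => (rho p z).val < v + 1)) := by
    apply filter_congr
    intro z _
    simp [Nat.lt_succ_iff]
  rw [this]
  exact card_rank_lt (by omega)

/-- number of elements strictly below b in R. -/
noncomputable def seqval (p : C1PairsOn n) (b : Fin n) : ℕ :=
  (univ.filter (fun a => p.1.2 a b)).card

lemma R_dcl {p : C1PairsOn n} {z z' b : Fin n} (h : p.1.2 z b) (h' : Pord p z' z) :
    p.1.2 z' b := by
  rcases h' with h' | h'
  · -- S z' z , R z b
    have h1 := S_ne h'
    have h2 := R_ne h
    have h3 : z' ≠ b := by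
      rintro rfl
      exact not_both (R_ne h) (Or.inr h') (Or.inl h)
    exact p.2.2.2.2 z' z b h1 h2 h3 h' h
  · exact p.2.2.1.2 h' h

/-- KEY: the R-columns are initial rank segments. -/
lemma R_iff_rank {p : C1PairsOn n} {a b : Fin n} :
    p.1.2 a b ↔ (rho p a).val < seqval p b := by
  constructor
  · intro h
    have hsub : (univ.filter (fun z : Fin n => (rho p z).val ≤ (rho p a).val))
        ⊆ (univ.filter (fun z => p.1.2 z b)) := by
      intro z hz
      rw [mem_filter] at hz ⊢
      refine ⟨mem_univ _, ?_⟩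
      rcases eq_or_lt_of_le hz.2 with heq | hlt
      · have : z = a := rho_inj (Fin.ext heq)
        rw [this]; exact h
      · exact R_dcl h (pord_iff_rho_lt.mpr hlt)
    have hcard := card_le_card hsub
    have heq : (univ.filter (fun z : Fin n => (rho p z).val ≤ (rho p a).val)).card
        = (rho p a).val + 1 := card_rank_le (rho p a).isLt
    unfold seqval
    omega
  · intro h
    by_contra hR
    have hsub : (univ.filter (fun z => p.1.2 z b))
        ⊆ (univ.filter (fun z : Fin n => (rho p z).val < (rho p a).val)) := by
      intro z hz
      rw [mem_filter] at hz ⊢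
      refine ⟨mem_univ _, ?_⟩
      by_contra hlt
      push_neg at hlt
      rcases eq_or_lt_of_le hlt with heq | hlt'
      · have : a = z := rho_inj (Fin.ext heq)
        rw [this] at hR
        exact hR hz.2
      · exact hR (R_dcl hz.2 (pord_iff_rho_lt.mpr hlt'))
    have hcard := card_le_card hsub
    have heq : (univ.filter (fun z : Fin n => (rho p z).val < (rho p a).val)).card
        = (rho p a).val := card_rank_lt (le_of_lt (rho p a).isLt)
    unfold seqval at h
    omega

noncomputable def pEquiv (p : C1PairsOn n) : Fin n ≃ Fin n :=
  Equiv.ofBijective (rho p) rho_bij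

lemma rho_symm_apply (p : C1PairsOn n) (r : Fin n) : rho p ((pEquiv p).symm r) = r :=
  (pEquiv p).apply_symm_apply r

/-- The threshold sequence of a C1-pair. -/
noncomputable def seqfn (p : C1PairsOn n) : ℕ → ℕ := fun k =>
  if h : 1 ≤ k ∧ k ≤ n then seqval p ((pEquiv p).symm ⟨k-1, by omega⟩) else 0

lemma seqfn_spec (p : C1PairsOn n) (b : Fin n) :
    seqfn p ((rho p b).val + 1) = seqval p b := by
  have hb := (rho p b).isLt
  have h : 1 ≤ (rho p b).val + 1 ∧ (rho p b).val + 1 ≤ n := by omega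
  rw [seqfn, dif_pos h]
  congr 1
  have : (⟨(rho p b).val + 1 - 1, by omega⟩ : Fin n) = rho p b := by
    apply Fin.ext; simp
  rw [this]
  exact (pEquiv p).symm_apply_apply b

lemma seqfn_out (p : C1PairsOn n) {k : ℕ} (h : ¬ (1 ≤ k ∧ k ≤ n)) : seqfn p k = 0 :=
  dif_neg h

lemma exists_rank (p : C1PairsOn n) {k : ℕ} (h1 : 1 ≤ k) (h2 : k ≤ n) :
    ∃ b : Fin n, (rho p b).val + 1 = k := by
  refine ⟨(pEquiv p).symm ⟨k-1, by omega⟩, ?_⟩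
  rw [rho_symm_apply]
  simp
  omega

lemma seqval_lt (p : C1PairsOn n) (b : Fin n) : seqval p b ≤ (rho p b).val := by
  have hsub : (univ.filter (fun a => p.1.2 a b))
      ⊆ (univ.filter (fun z : Fin n => (rho p z).val < (rho p b).val)) := by
    intro z hz
    rw [mem_filter] at hz ⊢
    exact ⟨mem_univ _, rho_lt_of_pord (Or.inr hz.2)⟩
  have := card_le_card hsub
  have h2 : (univ.filter (fun z : Fin n => (rho p z).val < (rho p b).val)).card
      = (rho p b).val := card_rank_lt (le_of_lt (rho p b).isLt)
  unfold seqval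
  omega

lemma seqfn_valid (p : C1PairsOn n) : Valid n (seqfn p) := by
  refine ⟨?_, ?_, ?_⟩
  · intro k hk1 hkn
    obtain ⟨b, hb⟩ := exists_rank p hk1 hkn
    rw [← hb, seqfn_spec]
    have := seqval_lt p b
    omega
  · intro j k hj1 hjk hkn h1 h2
    obtain ⟨y, hy⟩ := exists_rank p hj1 (by omega)
    obtain ⟨z, hz⟩ := exists_rank p (show 1 ≤ k by omega) hkn
    rw [← hy, seqfn_spec] at h2 ⊢
    rw [← hz, seqfn_spec] at h1 ⊢
    -- h1 : seqval z < j = rho y + 1, so ¬ R y z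
    have hRyz : ¬ p.1.2 y z := by
      rw [R_iff_rank]
      omega
    -- h2 : seqval y < j - 1 = rho y
    set t := seqval p y with ht
    have htn : t < n := by have := (rho p y).isLt; omega
    set x := (pEquiv p).symm ⟨t, htn⟩ with hx
    have hrx : (rho p x).val = t := by rw [hx, rho_symm_apply]
    have hRxy : ¬ p.1.2 x y := by
      rw [R_iff_rank, hrx]
      omega
    have hPxy : Pord p x y := by
      rw [pord_iff_rho_lt]
      rw [Fin.lt_def]
      omega
    have hSxy : p.1.1 x y := S_iff.mpr ⟨hPxy, hRxy⟩
    -- goal: seqval z ≤ seqval y = t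
    by_contra hcon
    push_neg at hcon
    have hRxz : p.1.2 x z := by
      rw [R_iff_rank, hrx]
      omega
    have hPyz : Pord p y z := by
      rw [pord_iff_rho_lt, Fin.lt_def]
      omega
    have hSyz : p.1.1 y z := S_iff.mpr ⟨hPyz, hRyz⟩
    have hSxz : p.1.1 x z := p.2.1.2 hSxy hSyz
    exact not_both (S_ne hSxz) (Or.inl hSxz) (Or.inl hRxz)
  · intro k hk
    by_contra hcon
    exact hk (seqfn_out p hcon)
lemma mmax_R (p : C1PairsOn n) : mmax p.1.2 = Bstat n (seqfn p) := by
  rw [mmax, Nat.card_eq_fintype_card, Fintype.card_subtype, Bstat]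
  apply card_bij (fun x _ => (rho p x).val + 1)
  · intro x hx
    rw [mem_filter] at hx
    rw [mem_filter, mem_Icc]
    have := (rho p x).isLt
    refine ⟨⟨by omega, by omega⟩, ?_⟩
    intro kk hk hkn
    obtain ⟨b, hb⟩ := exists_rank p (show 1 ≤ kk by omega) hkn
    rw [← hb, seqfn_spec]
    have hnR := hx.2 b
    rw [R_iff_rank] at hnR
    omega
  · intro a _ b _ hab
    exact rho_inj (p := p) (Fin.ext (show ((rho p a).val : ℕ) = (rho p b).val by omega))
  · intro t ht
    rw [mem_filter, mem_Icc] at ht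
    obtain ⟨b, hb⟩ := exists_rank p ht.1.1 ht.1.2
    refine ⟨b, ?_, by omega⟩
    rw [mem_filter]
    refine ⟨mem_univ _, fun y => ?_⟩
    rw [R_iff_rank]
    have hylt := (rho p y).isLt
    have hspec := seqfn_spec p y
    rcases le_or_gt ((rho p y).val + 1) t with hk | hk
    · have := seqval_lt p y
      omega
    · have := ht.2 ((rho p y).val + 1) hk (by omega)
      rw [hspec] at this
      omega

lemma mmax_S (p : C1PairsOn n) : mmax p.1.1 = Astat n (seqfn p) := by
  rw [mmax, Nat.card_eq_fintype_card, Fintype.card_subtype, Astat]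
  apply card_bij (fun x _ => (rho p x).val + 1)
  · intro x hx
    rw [mem_filter] at hx
    rw [mem_filter, mem_Icc]
    have := (rho p x).isLt
    refine ⟨⟨by omega, by omega⟩, ?_⟩
    intro kk hk hkn
    obtain ⟨b, hb⟩ := exists_rank p (show 1 ≤ kk by omega) hkn
    rw [← hb, seqfn_spec]
    have hPxb : Pord p x b := by
      rw [pord_iff_rho_lt, Fin.lt_def]
      omega
    have hnS := hx.2 b
    have hRxb : p.1.2 x b := by
      rcases hPxb with h | h
      · exact absurd h hnS
      · exact h
    rw [R_iff_rank] at hRxb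
    omega
  · intro a _ b _ hab
    exact rho_inj (p := p) (Fin.ext (show ((rho p a).val : ℕ) = (rho p b).val by omega))
  · intro t ht
    rw [mem_filter, mem_Icc] at ht
    obtain ⟨b, hb⟩ := exists_rank p ht.1.1 ht.1.2
    refine ⟨b, ?_, by omega⟩
    rw [mem_filter]
    refine ⟨mem_univ _, fun y hS => ?_⟩
    have hlt : (rho p b).val < (rho p y).val := Fin.lt_def.mp (pord_iff_rho_lt.mp (Or.inl hS))
    have hylt := (rho p y).isLt
    have hA := ht.2 ((rho p y).val + 1) (by omega) (by omega)
    rw [seqfn_spec] at hA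
    have hR : p.1.2 b y := R_iff_rank.mpr (by omega)
    exact not_both (S_ne hS) (Or.inl hS) (Or.inl hR)

lemma rho_iso {p q : C1PairsOn n} (f : Fin n ≃ Fin n)
    (hf : ∀ x y, (p.1.1 x y ↔ q.1.1 (f x) (f y)) ∧ (p.1.2 x y ↔ q.1.2 (f x) (f y)))
    (x : Fin n) : rho q (f x) = rho p x := by
  apply Fin.ext
  show (univ.filter (fun z => Pord q z (f x))).card = (univ.filter (fun z => Pord p z x)).card
  have h1 : (univ.filter (fun z => Pord q (f z) (f x))).card
      = (univ.filter (fun z => Pord q z (f x))).card :=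
    card_filter_comp f.bijective (fun z => Pord q z (f x))
  rw [← h1]
  have h2 : (univ.filter (fun z => Pord q (f z) (f x))) = (univ.filter (fun z => Pord p z x)) := by
    apply filter_congr
    intro z _
    constructor
    · rintro (h | h)
      · exact Or.inl ((hf z x).1.mpr h)
      · exact Or.inr ((hf z x).2.mpr h)
    · rintro (h | h)
      · exact Or.inl ((hf z x).1.mp h)
      · exact Or.inr ((hf z x).2.mp h)
  rw [h2]

lemma seqval_iso {p q : C1PairsOn n} (f : Fin n ≃ Fin n)
    (hf : ∀ x y, (p.1.1 x y ↔ q.1.1 (f x) (f y)) ∧ (p.1.2 x y ↔ q.1.2 (f x) (f y)))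
    (x : Fin n) : seqval q (f x) = seqval p x := by
  show (univ.filter (fun a => q.1.2 a (f x))).card = (univ.filter (fun a => p.1.2 a x)).card
  have h1 : (univ.filter (fun a => q.1.2 (f a) (f x))).card
      = (univ.filter (fun a => q.1.2 a (f x))).card :=
    card_filter_comp f.bijective (fun a => q.1.2 a (f x))
  rw [← h1]
  have h2 : (univ.filter (fun a => q.1.2 (f a) (f x))) = (univ.filter (fun a => p.1.2 a x)) := by
    apply filter_congr
    intro a _
    exact ((hf a x).2).symm
  rw [h2]

lemma seqfn_iso {p q : C1PairsOn n} (h : isoC1 p q) : seqfn p = seqfn q := by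
  obtain ⟨f, hf⟩ := h
  funext k
  by_cases hk : 1 ≤ k ∧ k ≤ n
  · obtain ⟨b, hb⟩ := exists_rank p hk.1 hk.2
    rw [← hb, seqfn_spec]
    have h1 : rho q (f b) = rho p b := rho_iso f hf b
    have h2 : seqfn q ((rho q (f b)).val + 1) = seqval q (f b) := seqfn_spec q (f b)
    rw [h1] at h2
    rw [h2, seqval_iso f hf b]
  · rw [seqfn_out p hk, seqfn_out q hk]

lemma iso_of_seqfn_eq {p q : C1PairsOn n} (h : seqfn p = seqfn q) : isoC1 p q := by
  refine ⟨(pEquiv p).trans (pEquiv q).symm, fun x y => ?_⟩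
  set f := (pEquiv p).trans (pEquiv q).symm with hfdef
  have hfx : ∀ z, rho q (f z) = rho p z := by
    intro z
    show rho q ((pEquiv q).symm (rho p z)) = rho p z
    exact rho_symm_apply q _
  have hsv : ∀ z, seqval q (f z) = seqval p z := by
    intro z
    have h2 : seqfn q ((rho q (f z)).val + 1) = seqval q (f z) := seqfn_spec q (f z)
    rw [hfx] at h2
    rw [← h2, ← h, seqfn_spec]
  have hR : ∀ a b, (p.1.2 a b ↔ q.1.2 (f a) (f b)) := by
    intro a b
    rw [R_iff_rank (p := p), R_iff_rank (p := q), hfx, hsv]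
  have hP : ∀ a b, (Pord p a b ↔ Pord q (f a) (f b)) := by
    intro a b
    rw [pord_iff_rho_lt (p := p), pord_iff_rho_lt (p := q), hfx, hfx]
  constructor
  · rw [S_iff (p := p), S_iff (p := q), hR, hP]
  · exact hR x y

/-- The canonical pair of a valid sequence. -/
def canonRel1 (n : ℕ) (c : ℕ → ℕ) : Fin n → Fin n → Prop :=
  fun a b => a < b ∧ c (b.val + 1) ≤ a.val
def canonRel2 (n : ℕ) (c : ℕ → ℕ) : Fin n → Fin n → Prop :=
  fun a b => a.val < c (b.val + 1)

lemma canon_c1 {c : ℕ → ℕ} (hc : Valid n c) : IsC1Pair (canonRel1 n c) (canonRel2 n c) := by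
  have hbound : ∀ b : Fin n, c (b.val + 1) ≤ b.val := by
    intro b
    have := hc.1 (b.val + 1) (by omega) (by have := b.isLt; omega)
    omega
  refine ⟨⟨?_, ?_⟩, ⟨?_, ?_⟩, ?_, ?_⟩
  · rintro x ⟨h1, _⟩
    exact lt_irrefl _ h1
  · rintro x y z ⟨h1, h2⟩ ⟨h3, h4⟩
    refine ⟨lt_trans h1 h3, ?_⟩
    have hzn : z.val < n := z.isLt
    have := hc.2.1 (y.val + 1) (z.val + 1) (by omega) (by
        have := Fin.lt_def.mp h3; omega) (by omega)
      (by have := Fin.lt_def.mp h3; omega)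
      (by have := Fin.lt_def.mp h1; omega)
    omega
  · intro x h
    have := hbound x
    unfold canonRel2 at h
    omega
  · intro x y z h1 h2
    unfold canonRel2 at *
    have := hbound y
    omega
  · intro x y hxy
    have key : ∀ a b : Fin n, a < b →
        Xor' (Cmp (canonRel1 n c) a b) (Cmp (canonRel2 n c) a b) := by
      intro a b hab
      have hab' := Fin.lt_def.mp hab
      by_cases hR : a.val < c (b.val + 1)
      · right
        refine ⟨Or.inl hR, ?_⟩
        rintro (⟨_, h⟩ | ⟨h, _⟩)
        · omega
        · exact absurd h (not_lt.mpr (le_of_lt hab))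
      · left
        refine ⟨Or.inl ⟨hab, by omega⟩, ?_⟩
        rintro (h | h)
        · exact hR h
        · unfold canonRel2 at h
          have := hbound a
          omega
    rcases Ne.lt_or_gt hxy with h | h
    · exact key x y h
    · have := key y x h
      unfold Xor' at this ⊢
      unfold Cmp at this ⊢
      rwa [or_comm (a := canonRel1 n c x y), or_comm (a := canonRel2 n c x y)]
  · rintro x y z _ _ _ ⟨h1, _⟩ h2
    unfold canonRel2 at *
    have := Fin.lt_def.mp h1
    omega

noncomputable def canonPair {c : ℕ → ℕ} (hc : Valid n c) : C1PairsOn n :=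
  ⟨⟨canonRel1 n c, canonRel2 n c⟩, canon_c1 hc⟩

lemma canon_pord {c : ℕ → ℕ} (hc : Valid n c) (a b : Fin n) :
    Pord (canonPair hc) a b ↔ a < b := by
  constructor
  · rintro (⟨h, _⟩ | h)
    · exact h
    · have hb : c (b.val + 1) ≤ b.val := by
        have := hc.1 (b.val + 1) (by omega) (by have := b.isLt; omega)
        omega
      have : a.val < c (b.val + 1) := h
      rw [Fin.lt_def]
      omega
  · intro h
    by_cases hR : a.val < c (b.val + 1)
    · exact Or.inr hR
    · have hh : canonRel1 n c a b := ⟨h, by omega⟩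
      exact Or.inl hh

lemma canon_rho {c : ℕ → ℕ} (hc : Valid n c) (a : Fin n) : rho (canonPair hc) a = a := by
  apply Fin.ext
  show (univ.filter (fun z => Pord (canonPair hc) z a)).card = a.val
  have h2 : (univ.filter (fun z => Pord (canonPair hc) z a))
      = (univ.filter (fun z : Fin n => z.val < a.val)) := by
    apply filter_congr
    intro z _
    rw [canon_pord hc z a, Fin.lt_def]
  rw [h2]
  exact card_val_lt (le_of_lt a.isLt)

lemma canon_seqval {c : ℕ → ℕ} (hc : Valid n c) (b : Fin n) :
    seqval (canonPair hc) b = c (b.val + 1) := by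
  show (univ.filter (fun a => (canonPair hc).1.2 a b)).card = c (b.val + 1)
  have h2 : (univ.filter (fun a => (canonPair hc).1.2 a b))
      = (univ.filter (fun a : Fin n => a.val < c (b.val + 1))) := by
    apply filter_congr
    intro a _
    exact Iff.rfl
  rw [h2]
  apply card_val_lt
  have := hc.1 (b.val + 1) (by omega) (by have := b.isLt; omega)
  have := b.isLt
  omega

lemma canon_seqfn {c : ℕ → ℕ} (hc : Valid n c) : seqfn (canonPair hc) = c := by
  funext k
  by_cases hk : 1 ≤ k ∧ k ≤ n
  · set b : Fin n := ⟨k - 1, by omega⟩ with hb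
    have h1 : seqfn (canonPair hc) ((rho (canonPair hc) b).val + 1) = seqval (canonPair hc) b :=
      seqfn_spec _ b
    rw [canon_rho hc b] at h1
    have hval : b.val + 1 = k := by
      rw [hb]; simp; omega
    rw [hval] at h1
    rw [h1, canon_seqval hc b, hval]
  · rw [seqfn_out _ hk]
    by_contra hz
    have := hc.2.2 k (fun h => hz h.symm)
    exact hk this


end Pairs


section Assembly
variable {n : ℕ}

noncomputable def classSeq (n : ℕ) : Quot (isoC1 (n := n)) → (ℕ → ℕ) :=
  Quot.lift seqfn (fun _ _ h => seqfn_iso h)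

lemma classSeq_mk (p : C1PairsOn n) : classSeq n (Quot.mk _ p) = seqfn p := rfl

noncomputable def Theta (n k l : ℕ) :
    {q : Quot (isoC1 (n := n)) //
      ∃ p : C1PairsOn n, q = Quot.mk _ p ∧ mmax p.1.1 = k ∧ mmax p.1.2 = l} → SSet n k l :=
  fun x => ⟨classSeq n x.1, by
    obtain ⟨p, hp1, hp2, hp3⟩ := x.2
    rw [hp1, classSeq_mk]
    refine ⟨seqfn_valid p, ?_, ?_⟩
    · rw [← mmax_S]; exact hp2
    · rw [← mmax_R]; exact hp3⟩

lemma Theta_bij (n k l : ℕ) : Function.Bijective (Theta n k l) := by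
  constructor
  · rintro ⟨q1, hq1⟩ ⟨q2, hq2⟩ h
    obtain ⟨p1, rfl, _, _⟩ := hq1
    obtain ⟨p2, rfl, _, _⟩ := hq2
    apply Subtype.ext
    have hval : seqfn p1 = seqfn p2 := congrArg Subtype.val h
    exact Quot.sound (iso_of_seqfn_eq hval)
  · rintro ⟨c, hv, ha, hb⟩
    refine ⟨⟨Quot.mk _ (canonPair hv), ⟨canonPair hv, rfl, ?_, ?_⟩⟩, ?_⟩
    · rw [mmax_S, canon_seqfn hv]; exact ha
    · rw [mmax_R, canon_seqfn hv]; exact hb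
    · apply Subtype.ext
      show classSeq n (Quot.mk _ (canonPair hv)) = c
      rw [classSeq_mk, canon_seqfn hv]

end Assembly

end Aux

/-- Proposition 2 (pro-cat2): `mmax S` and `mmax R` have symmetric joint distribution on
isomorphism classes of C1-pairs of order `n`. -/
theorem stmt_8 (n k ℓ : ℕ) :
    Nonempty
      ({q : Quot (isoC1 (n := n)) //
          ∃ p : C1PairsOn n, q = Quot.mk _ p ∧ mmax p.1.1 = k ∧ mmax p.1.2 = ℓ} ≃
       {q : Quot (isoC1 (n := n)) //
          ∃ p : C1PairsOn n, q = Quot.mk _ p ∧ mmax p.1.1 = ℓ ∧ mmax p.1.2 = k}) := by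
  have e1 := Equiv.ofBijective _ (Aux.Theta_bij n k ℓ)
  have e2 := Equiv.ofBijective _ (Aux.Theta_bij n ℓ k)
  have e3 : Nonempty (Aux.SSet n k ℓ ≃ Aux.SSet n ℓ k) :=
    Finite.card_eq.mp (Aux.card_symm n k ℓ)
  obtain ⟨e⟩ := e3
  exact ⟨e1.trans (e.trans e2.symm)⟩

end FishburnPaper
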